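/- arXiv:1402.4987 — 9 statements merged into one kernel-verified Lean document; each statement's English description precedes it below -/
import Mathlib

section
/- Let β > 0 and ζ > 0. Let b : [0,1] → ℝ be continuous with b(0) = 0, let g : [0,1] → ℝ be continuous and nonnegative, and let ξ : [0,1] → ℝ be continuous and positive such that for every t ∈ [0,1], ξ(t)^{1+β} = e^{-(3/2)(1+β)t + (1+β)b(t)} ζ^{1+β} + (1+β) ∫₀^t e^{-(3/2)(1+β)(t-s) + (1+β)(b(t)-b(s))} g(s) ds. Write b*_t = sup_{0≤s≤t} |b(s)|. Then for every t ∈ [0,1], inf_{0≤s≤t} ξ(s) ≥ e^{-(3/2)t - b*_t} ζ. -/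
open MeasureTheory Set Real

/-- Pathwise form of the second inequality of Lemma 3.1. -/
theorem stmt_1 (β ζ : ℝ) (hβ : 0 < β) (hζ : 0 < ζ)
    (b g ξ : ℝ → ℝ)
    (hb : ContinuousOn b (Icc 0 1)) (hb0 : b 0 = 0)
    (hg : ContinuousOn g (Icc 0 1)) (hgpos : ∀ t ∈ Icc (0:ℝ) 1, 0 ≤ g t)
    (hξ : ContinuousOn ξ (Icc 0 1)) (hξpos : ∀ t ∈ Icc (0:ℝ) 1, 0 < ξ t)
    (heq : ∀ t ∈ Icc (0:ℝ) 1,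
      ξ t ^ (1 + β) =
        Real.exp (-(3/2) * (1 + β) * t + (1 + β) * b t) * ζ ^ (1 + β)
        + (1 + β) * ∫ s in (0:ℝ)..t,
            Real.exp (-(3/2) * (1 + β) * (t - s) + (1 + β) * (b t - b s)) * g s) :
    ∀ t ∈ Icc (0:ℝ) 1,
      Real.exp (-(3/2) * t - sSup ((fun s => |b s|) '' Icc (0:ℝ) t)) * ζ
        ≤ sInf (ξ '' Icc (0:ℝ) t) := by
  intro t ht
  have hp : (0:ℝ) < 1 + β := by linarith
  set M := sSup ((fun s => |b s|) '' Icc (0:ℝ) t) with hM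
  have hsub : Icc (0:ℝ) t ⊆ Icc (0:ℝ) 1 := Icc_subset_Icc le_rfl ht.2
  have hbdd : BddAbove ((fun s => |b s|) '' Icc (0:ℝ) t) :=
    (isCompact_Icc.image_of_continuousOn ((hb.mono hsub).abs)).bddAbove
  apply le_csInf ((nonempty_Icc.2 ht.1).image ξ)
  rintro x ⟨s, hs, rfl⟩
  have hs1 : s ∈ Icc (0:ℝ) 1 := hsub hs
  have hbM : |b s| ≤ M := le_csSup hbdd ⟨s, hs, rfl⟩
  -- integral nonneg
  have hint : 0 ≤ ∫ u in (0:ℝ)..s,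
      Real.exp (-(3/2) * (1 + β) * (s - u) + (1 + β) * (b s - b u)) * g u := by
    apply intervalIntegral.integral_nonneg hs.1
    intro u hu
    exact mul_nonneg (Real.exp_pos _).le
      (hgpos u ⟨hu.1, hu.2.trans hs1.2⟩)
  have key : (Real.exp (-(3/2) * s + b s) * ζ) ^ (1 + β) ≤ ξ s ^ (1 + β) := by
    rw [heq s hs1]
    have : (Real.exp (-(3/2) * s + b s) * ζ) ^ (1 + β)
        = Real.exp (-(3/2) * (1 + β) * s + (1 + β) * b s) * ζ ^ (1 + β) := by
      rw [Real.mul_rpow (Real.exp_pos _).le hζ.le, ← Real.exp_mul]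
      ring_nf
    rw [this]
    nlinarith [mul_nonneg hp.le hint]
  have h1 : Real.exp (-(3/2) * s + b s) * ζ ≤ ξ s :=
    (Real.rpow_le_rpow_iff (by positivity) (hξpos s hs1).le hp).mp key
  have h2 : Real.exp (-(3/2) * t - M) ≤ Real.exp (-(3/2) * s + b s) := by
    apply Real.exp_le_exp.mpr
    have := neg_abs_le (b s)
    linarith [hs.2]
  calc Real.exp (-(3/2) * t - M) * ζ ≤ Real.exp (-(3/2) * s + b s) * ζ :=
        mul_le_mul_of_nonneg_right h2 hζ.le
    _ ≤ ξ s := h1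
end

section
/- Let β > 0. There exists a constant C > 0 depending only on β such that the following holds. Let ζ > 0, let b : [0,1] → ℝ be continuous with b(0) = 0, let g : [0,1] → ℝ be continuous and nonnegative, and let ξ : [0,1] → ℝ be continuous and positive such that for every t ∈ [0,1], ξ(t)^{1+β} = e^{-(3/2)(1+β)t + (1+β)b(t)} ζ^{1+β} + (1+β) ∫₀^t e^{-(3/2)(1+β)(t-s) + (1+β)(b(t)-b(s))} g(s) ds. Write b*_1 = sup_{0≤s≤1} |b(s)|. Then sup_{0≤t≤1} ξ(t) ≤ C ( e^{b*_1} ζ + e^{2 b*_1} ( sup_{0≤t≤1} g(t) )^{1/(1+β)} ). -/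
open MeasureTheory Set Real

lemma my_rpow_add_le (x y p : ℝ) (hx : 0 ≤ x) (hy : 0 ≤ y) (hp : 0 ≤ p) (hp1 : p ≤ 1) :
    (x + y) ^ p ≤ x ^ p + y ^ p := by
  rw [← Real.coe_toNNReal x hx, ← Real.coe_toNNReal y hy, ← NNReal.coe_add,
    ← NNReal.coe_rpow, ← NNReal.coe_rpow, ← NNReal.coe_rpow, ← NNReal.coe_add]
  exact_mod_cast NNReal.rpow_add_le_add_rpow _ _ hp hp1

/-- Pathwise form of the third inequality of Lemma 3.1. -/
theorem stmt_2 (β : ℝ) (hβ : 0 < β) :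
    ∃ C > (0:ℝ), ∀ (ζ : ℝ), 0 < ζ → ∀ (b g ξ : ℝ → ℝ),
      ContinuousOn b (Icc 0 1) → b 0 = 0 →
      ContinuousOn g (Icc 0 1) → (∀ t ∈ Icc (0:ℝ) 1, 0 ≤ g t) →
      ContinuousOn ξ (Icc 0 1) → (∀ t ∈ Icc (0:ℝ) 1, 0 < ξ t) →
      (∀ t ∈ Icc (0:ℝ) 1,
        ξ t ^ (1 + β) =
          Real.exp (-(3/2) * (1 + β) * t + (1 + β) * b t) * ζ ^ (1 + β)
          + (1 + β) * ∫ s in (0:ℝ)..t,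
              Real.exp (-(3/2) * (1 + β) * (t - s) + (1 + β) * (b t - b s)) * g s) →
      sSup (ξ '' Icc (0:ℝ) 1) ≤
        C * (Real.exp (sSup ((fun s => |b s|) '' Icc (0:ℝ) 1)) * ζ
          + Real.exp (2 * sSup ((fun s => |b s|) '' Icc (0:ℝ) 1))
              * (sSup (g '' Icc (0:ℝ) 1)) ^ (1 / (1 + β))) := by
  have hβ1 : (0:ℝ) < 1 + β := by linarith
  have hβ1' : (1:ℝ) + β ≠ 0 := ne_of_gt hβ1
  have hpnn : (0:ℝ) ≤ 1 / (1 + β) := by positivity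
  have hp1 : 1 / (1 + β) ≤ 1 := by
    rw [div_le_one hβ1]; linarith
  refine ⟨1 + β, hβ1, ?_⟩
  intro ζ hζ b g ξ hb hb0 hg hg0 hξc hξ0 hid
  set B := sSup ((fun s => |b s|) '' Icc (0:ℝ) 1) with hBdef
  set G := sSup (g '' Icc (0:ℝ) 1) with hGdef
  have h01 : (0:ℝ) ∈ Icc (0:ℝ) 1 := ⟨le_refl 0, zero_le_one⟩
  have hbddB : BddAbove ((fun s => |b s|) '' Icc (0:ℝ) 1) :=
    (isCompact_Icc.image_of_continuousOn hb.abs).bddAbove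
  have hbddG : BddAbove (g '' Icc (0:ℝ) 1) :=
    (isCompact_Icc.image_of_continuousOn hg).bddAbove
  have hBb : ∀ s ∈ Icc (0:ℝ) 1, |b s| ≤ B := fun s hs => le_csSup hbddB ⟨s, hs, rfl⟩
  have hB0 : 0 ≤ B := le_trans (abs_nonneg (b 0)) (hBb 0 h01)
  have hGb : ∀ s ∈ Icc (0:ℝ) 1, g s ≤ G := fun s hs => le_csSup hbddG ⟨s, hs, rfl⟩
  have hG0 : 0 ≤ G := le_trans (hg0 0 h01) (hGb 0 h01)
  -- pointwise bound
  have key : ∀ t ∈ Icc (0:ℝ) 1,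
      ξ t ≤ Real.exp B * ζ + (1 + β) * (Real.exp (2 * B) * G ^ (1 / (1 + β))) := by
    intro t ht
    obtain ⟨ht0, ht1⟩ := ht
    -- bound the integral
    have hsub : Icc (0:ℝ) t ⊆ Icc (0:ℝ) 1 := Icc_subset_Icc le_rfl ht1
    have hcont : ContinuousOn
        (fun s => Real.exp (-(3/2) * (1 + β) * (t - s) + (1 + β) * (b t - b s)) * g s)
        (Icc (0:ℝ) t) := by
      apply ContinuousOn.mul _ (hg.mono hsub)
      apply Real.continuous_exp.comp_continuousOn
      exact ContinuousOn.add (by fun_prop)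
        (ContinuousOn.mul continuousOn_const
          (ContinuousOn.sub continuousOn_const (hb.mono hsub)))
    have hint : IntervalIntegrable
        (fun s => Real.exp (-(3/2) * (1 + β) * (t - s) + (1 + β) * (b t - b s)) * g s)
        volume 0 t := by
      apply ContinuousOn.intervalIntegrable
      rwa [uIcc_of_le ht0]
    have hpt : ∀ s ∈ Icc (0:ℝ) t,
        Real.exp (-(3/2) * (1 + β) * (t - s) + (1 + β) * (b t - b s)) * g s
          ≤ Real.exp ((1 + β) * (2 * B)) * G := by
      intro s hs
      have hs1 : s ∈ Icc (0:ℝ) 1 := hsub hs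
      have h1 : Real.exp (-(3/2) * (1 + β) * (t - s) + (1 + β) * (b t - b s))
          ≤ Real.exp ((1 + β) * (2 * B)) := by
        apply Real.exp_le_exp.2
        have hbt := abs_le.1 (hBb t ⟨ht0, ht1⟩)
        have hbs := abs_le.1 (hBb s hs1)
        nlinarith [hs.2, hs.1]
      exact mul_le_mul h1 (hGb s hs1) (hg0 s hs1) (Real.exp_pos _).le
    have hIbound : (∫ s in (0:ℝ)..t,
        Real.exp (-(3/2) * (1 + β) * (t - s) + (1 + β) * (b t - b s)) * g s)
        ≤ Real.exp ((1 + β) * (2 * B)) * G := by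
      have hmono := intervalIntegral.integral_mono_on ht0 hint
        (intervalIntegrable_const (c := Real.exp ((1 + β) * (2 * B)) * G)) hpt
      rw [intervalIntegral.integral_const, smul_eq_mul] at hmono
      refine le_trans hmono ?_
      nlinarith [mul_nonneg (Real.exp_pos ((1 + β) * (2 * B))).le hG0]
    -- first term bound
    have h2 : Real.exp (-(3/2) * (1 + β) * t + (1 + β) * b t) ≤ Real.exp ((1 + β) * B) := by
      apply Real.exp_le_exp.2
      have hbt := abs_le.1 (hBb t ⟨ht0, ht1⟩)
      nlinarith
    have hA : ξ t ^ (1 + β) ≤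
        Real.exp ((1 + β) * B) * ζ ^ (1 + β) + (1 + β) * (Real.exp ((1 + β) * (2 * B)) * G) := by
      rw [hid t ⟨ht0, ht1⟩]
      have hζp : (0:ℝ) ≤ ζ ^ (1 + β) := Real.rpow_nonneg hζ.le _
      gcongr
    -- take rpow 1/(1+β)
    have hξt : 0 < ξ t := hξ0 t ⟨ht0, ht1⟩
    have step : ξ t ≤ (Real.exp ((1 + β) * B) * ζ ^ (1 + β)
        + (1 + β) * (Real.exp ((1 + β) * (2 * B)) * G)) ^ (1 / (1 + β)) := by
      have := Real.rpow_le_rpow (Real.rpow_nonneg hξt.le _) hA hpnn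
      rwa [← Real.rpow_mul hξt.le, mul_one_div, div_self hβ1', Real.rpow_one] at this
    refine le_trans step ?_
    have hx1 : (0:ℝ) ≤ Real.exp ((1 + β) * B) * ζ ^ (1 + β) :=
      mul_nonneg (Real.exp_pos _).le (Real.rpow_nonneg hζ.le _)
    have hx2 : (0:ℝ) ≤ (1 + β) * (Real.exp ((1 + β) * (2 * B)) * G) :=
      mul_nonneg hβ1.le (mul_nonneg (Real.exp_pos _).le hG0)
    refine le_trans (my_rpow_add_le _ _ _ hx1 hx2 hpnn hp1) ?_
    have e1 : (Real.exp ((1 + β) * B) * ζ ^ (1 + β)) ^ (1 / (1 + β)) = Real.exp B * ζ := by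
      have h₁ : (1 + β) * B * (1 / (1 + β)) = B := by field_simp
      have h₂ : (1 + β) * (1 / (1 + β)) = 1 := by field_simp
      rw [Real.mul_rpow (Real.exp_pos _).le (Real.rpow_nonneg hζ.le _),
        ← Real.exp_mul, ← Real.rpow_mul hζ.le, h₁, h₂, Real.rpow_one]
    have e2 : ((1 + β) * (Real.exp ((1 + β) * (2 * B)) * G)) ^ (1 / (1 + β))
        ≤ (1 + β) * (Real.exp (2 * B) * G ^ (1 / (1 + β))) := by
      have h₃ : (1 + β) * (2 * B) * (1 / (1 + β)) = 2 * B := by field_simp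
      rw [Real.mul_rpow hβ1.le (mul_nonneg (Real.exp_pos _).le hG0),
        Real.mul_rpow (Real.exp_pos _).le hG0, ← Real.exp_mul, h₃]
      have : (1 + β) ^ (1 / (1 + β)) ≤ (1 + β) := by
        calc (1 + β) ^ (1 / (1 + β)) ≤ (1 + β) ^ (1:ℝ) :=
              Real.rpow_le_rpow_of_exponent_le (by linarith) hp1
          _ = 1 + β := Real.rpow_one _
      have hrest : (0:ℝ) ≤ Real.exp (2 * B) * G ^ (1 / (1 + β)) :=
        mul_nonneg (Real.exp_pos _).le (Real.rpow_nonneg hG0 _)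
      exact mul_le_mul_of_nonneg_right this hrest
    rw [e1]; linarith
  -- conclude
  have hne : (ξ '' Icc (0:ℝ) 1).Nonempty := ⟨ξ 0, 0, h01, rfl⟩
  apply csSup_le hne
  rintro x ⟨t, ht, rfl⟩
  refine le_trans (key t ht) ?_
  have hterm1 : 0 ≤ Real.exp B * ζ := mul_nonneg (Real.exp_pos _).le hζ.le
  have hterm2 : 0 ≤ Real.exp (2 * B) * G ^ (1 / (1 + β)) :=
    mul_nonneg (Real.exp_pos _).le (Real.rpow_nonneg hG0 _)
  nlinarith [mul_nonneg hβ.le hterm1]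
end

section
/- Let β > 0, δ > 0 and ζ > 0. Let b : [0,1] → ℝ be continuous with b(0) = 0 and write b*_1 = sup_{0≤s≤1} |b(s)|. Let g : [0,1] → ℝ be continuous and nonnegative, let ξ : [0,1] → ℝ be continuous and positive with ξ(s) ≥ e^{-(3/2)s + b(s)} ζ for all s ∈ [0,1], and let m : [0,1] → ℝ be continuous with m(0) = 0, such that for every t ∈ [0,1], ξ(t)^{-δ} - ζ^{-δ} = (δ(3+δ)/2) ∫₀^t ξ(s)^{-δ} ds - δ ∫₀^t g(s) / ξ(s)^{1+δ+β} ds - δ m(t). Then ∫₀^1 g(s) / ξ(s)^{1+β+δ} ds ≤ δ^{-1} ζ^{-δ} + ((3+δ)/2) e^{(3/2)δ + δ b*_1} ζ^{-δ} + sup_{0≤t≤1} |m(t)|. -/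
open MeasureTheory Set Real

/-- Pathwise form of Lemma 3.3. -/
theorem stmt_3 (β δ ζ : ℝ) (hβ : 0 < β) (hδ : 0 < δ) (hζ : 0 < ζ)
    (b g ξ m : ℝ → ℝ)
    (hb : ContinuousOn b (Icc 0 1)) (hb0 : b 0 = 0)
    (hg : ContinuousOn g (Icc 0 1)) (hgpos : ∀ t ∈ Icc (0:ℝ) 1, 0 ≤ g t)
    (hξ : ContinuousOn ξ (Icc 0 1)) (hξpos : ∀ t ∈ Icc (0:ℝ) 1, 0 < ξ t)
    (hξlow : ∀ s ∈ Icc (0:ℝ) 1, Real.exp (-(3/2) * s + b s) * ζ ≤ ξ s)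
    (hm : ContinuousOn m (Icc 0 1)) (hm0 : m 0 = 0)
    (heq : ∀ t ∈ Icc (0:ℝ) 1,
      ξ t ^ (-δ) - ζ ^ (-δ) =
        (δ * (3 + δ) / 2) * (∫ s in (0:ℝ)..t, ξ s ^ (-δ))
        - δ * (∫ s in (0:ℝ)..t, g s / ξ s ^ (1 + δ + β))
        - δ * m t) :
    (∫ s in (0:ℝ)..1, g s / ξ s ^ (1 + β + δ)) ≤
      δ⁻¹ * ζ ^ (-δ)
      + ((3 + δ) / 2) * Real.exp ((3/2) * δ + δ * sSup ((fun s => |b s|) '' Icc (0:ℝ) 1))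
          * ζ ^ (-δ)
      + sSup ((fun t => |m t|) '' Icc (0:ℝ) 1) := by
  have h01 : (1:ℝ) ∈ Icc (0:ℝ) 1 := by constructor <;> norm_num
  set Mb := sSup ((fun s => |b s|) '' Icc (0:ℝ) 1) with hMbdef
  set Mm := sSup ((fun t => |m t|) '' Icc (0:ℝ) 1) with hMmdef
  have hcomp : IsCompact (Icc (0:ℝ) 1) := isCompact_Icc
  have hbddb : BddAbove ((fun s => |b s|) '' Icc (0:ℝ) 1) :=
    (hcomp.image_of_continuousOn hb.abs).bddAbove
  have hbddm : BddAbove ((fun t => |m t|) '' Icc (0:ℝ) 1) :=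
    (hcomp.image_of_continuousOn hm.abs).bddAbove
  have hMb : ∀ s ∈ Icc (0:ℝ) 1, |b s| ≤ Mb := fun s hs =>
    le_csSup hbddb (Set.mem_image_of_mem _ hs)
  have hMm : ∀ s ∈ Icc (0:ℝ) 1, |m s| ≤ Mm := fun s hs =>
    le_csSup hbddm (Set.mem_image_of_mem _ hs)
  set C := Real.exp ((3/2) * δ + δ * Mb) * ζ ^ (-δ) with hCdef
  have hbound : ∀ s ∈ Icc (0:ℝ) 1, ξ s ^ (-δ) ≤ C := by
    intro s hs
    have hlow := hξlow s hs
    have hexppos : (0:ℝ) < Real.exp (-(3/2) * s + b s) * ζ :=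
      mul_pos (Real.exp_pos _) hζ
    have h1 : ξ s ^ (-δ) ≤ (Real.exp (-(3/2) * s + b s) * ζ) ^ (-δ) :=
      Real.rpow_le_rpow_of_nonpos hexppos hlow (by linarith)
    have h2 : (Real.exp (-(3/2) * s + b s) * ζ) ^ (-δ)
        = Real.exp ((-(3/2) * s + b s) * (-δ)) * ζ ^ (-δ) := by
      rw [Real.mul_rpow (le_of_lt (Real.exp_pos _)) hζ.le,
        Real.rpow_def_of_pos (Real.exp_pos _), Real.log_exp]
    have h3 : (-(3/2) * s + b s) * (-δ) ≤ (3/2) * δ + δ * Mb := by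
      have hs1 : s ≤ 1 := hs.2
      have hs0 : 0 ≤ s := hs.1
      have hbs : -b s ≤ Mb := (neg_le_abs _).trans (hMb s hs)
      nlinarith [hδ.le]
    have h4 : Real.exp ((-(3/2) * s + b s) * (-δ)) ≤ Real.exp ((3/2) * δ + δ * Mb) :=
      Real.exp_le_exp.mpr h3
    have hζpow : (0:ℝ) ≤ ζ ^ (-δ) := (Real.rpow_pos_of_pos hζ _).le
    calc ξ s ^ (-δ) ≤ Real.exp ((-(3/2) * s + b s) * (-δ)) * ζ ^ (-δ) := by
          rw [← h2]; exact h1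
      _ ≤ C := mul_le_mul_of_nonneg_right h4 hζpow
  -- integrability of ξ^(-δ) on [0,1]
  have hξcont : ContinuousOn (fun s => ξ s ^ (-δ)) (Icc (0:ℝ) 1) := by
    apply ContinuousOn.rpow_const hξ
    intro x hx; exact Or.inl (ne_of_gt (hξpos x hx))
  have huIcc : Set.uIcc (0:ℝ) 1 = Icc (0:ℝ) 1 := Set.uIcc_of_le (by norm_num)
  have hint : IntervalIntegrable (fun s => ξ s ^ (-δ)) volume 0 1 := by
    apply ContinuousOn.intervalIntegrable
    rwa [huIcc]
  have hI1 : (∫ s in (0:ℝ)..1, ξ s ^ (-δ)) ≤ C := by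
    have := intervalIntegral.integral_mono_on (by norm_num : (0:ℝ) ≤ 1) hint
      (intervalIntegrable_const) hbound
    simpa using this
  -- from heq at t = 1
  have key := heq 1 h01
  have hexpeq : (fun s => g s / ξ s ^ (1 + β + δ)) = fun s => g s / ξ s ^ (1 + δ + β) := by
    funext s; rw [show (1 + β + δ) = 1 + δ + β from by ring]
  rw [show (∫ s in (0:ℝ)..1, g s / ξ s ^ (1 + β + δ))
      = (∫ s in (0:ℝ)..1, g s / ξ s ^ (1 + δ + β)) from by rw [hexpeq]]
  have hξ1pos : (0:ℝ) < ξ 1 ^ (-δ) := Real.rpow_pos_of_pos (hξpos 1 h01) _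
  have hm1 : -m 1 ≤ Mm := (neg_le_abs _).trans (hMm 1 h01)
  have hI2 : δ * (∫ s in (0:ℝ)..1, g s / ξ s ^ (1 + δ + β))
      = ζ ^ (-δ) - ξ 1 ^ (-δ) + (δ * (3 + δ) / 2) * (∫ s in (0:ℝ)..1, ξ s ^ (-δ))
        - δ * m 1 := by linarith [key]
  have hstep : δ * (∫ s in (0:ℝ)..1, g s / ξ s ^ (1 + δ + β))
      ≤ ζ ^ (-δ) + (δ * (3 + δ) / 2) * C + δ * Mm := by
    have hc1 : (δ * (3 + δ) / 2) * (∫ s in (0:ℝ)..1, ξ s ^ (-δ))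
        ≤ (δ * (3 + δ) / 2) * C := by
      apply mul_le_mul_of_nonneg_left hI1
      positivity
    nlinarith [hξ1pos, hm1, hδ]
  have hfinal : (∫ s in (0:ℝ)..1, g s / ξ s ^ (1 + δ + β))
      ≤ δ⁻¹ * ζ ^ (-δ) + ((3 + δ) / 2) * C + Mm := by
    rw [← mul_le_mul_iff_right₀ hδ]
    calc δ * (∫ s in (0:ℝ)..1, g s / ξ s ^ (1 + δ + β))
        ≤ ζ ^ (-δ) + (δ * (3 + δ) / 2) * C + δ * Mm := hstep
      _ = δ * (δ⁻¹ * ζ ^ (-δ) + ((3 + δ) / 2) * C + Mm) := by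
          field_simp
  calc (∫ s in (0:ℝ)..1, g s / ξ s ^ (1 + δ + β))
      ≤ δ⁻¹ * ζ ^ (-δ) + ((3 + δ) / 2) * C + Mm := hfinal
    _ = δ⁻¹ * ζ ^ (-δ) + ((3 + δ) / 2) * Real.exp ((3/2) * δ + δ * Mb) * ζ ^ (-δ) + Mm := by
        rw [hCdef]; ring
end

section
/- Let β > 0 and ζ > 0. Let f ∈ L²([0,1];ℝ) and set h(t) = ∫₀^t f(s) ds. Let g : [0,1] → ℝ be continuous and nonnegative, and let ξ : [0,1] → ℝ be continuous and positive with ξ(0) = ζ satisfying, for every t ∈ [0,1], ξ(t) = ζ + ∫₀^t ( -ξ(s) + g(s) ξ(s)^{-β} + ξ(s) f(s) ) ds. Then ξ(t) ≥ e^{-t - ‖f‖_{L²([0,1])}} ζ for all t ∈ [0,1]. -/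
open MeasureTheory Set Real Nat


/-- Product rule for primitives of interval-integrable functions on `[0,1]`. -/
lemma prod_rule_aux (p q u v : ℝ → ℝ) (a b : ℝ)
    (hp : IntervalIntegrable p volume 0 1) (hq : IntervalIntegrable q volume 0 1)
    (hu : ∀ t ∈ Icc (0:ℝ) 1, u t = a + ∫ s in (0:ℝ)..t, p s)
    (hv : ∀ t ∈ Icc (0:ℝ) 1, v t = b + ∫ s in (0:ℝ)..t, q s) :
    ∀ t ∈ Icc (0:ℝ) 1, u t * v t = a * b + ∫ s in (0:ℝ)..t, (p s * v s + u s * q s) := by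
  have huIcc : uIcc (0:ℝ) 1 = Icc 0 1 := uIcc_of_le zero_le_one
  have hucont : ContinuousOn u (Icc 0 1) := by
    have hc : ContinuousOn (fun t => a + ∫ s in (0:ℝ)..t, p s) (Icc 0 1) := by
      apply continuousOn_const.add
      have := intervalIntegral.continuousOn_primitive_interval' hp (left_mem_uIcc (a := (0:ℝ)) (b := 1))
      rwa [huIcc] at this
    exact hc.congr (fun t ht => hu t ht)
  have hvcont : ContinuousOn v (Icc 0 1) := by
    have hc : ContinuousOn (fun t => b + ∫ s in (0:ℝ)..t, q s) (Icc 0 1) := by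
      apply continuousOn_const.add
      have := intervalIntegral.continuousOn_primitive_interval' hq (left_mem_uIcc (a := (0:ℝ)) (b := 1))
      rwa [huIcc] at this
    exact hc.congr (fun t ht => hv t ht)
  intro t ht
  obtain ⟨ht0, ht1⟩ := ht
  have hsub : uIcc (0:ℝ) t ⊆ uIcc (0:ℝ) 1 := by
    rw [huIcc, uIcc_of_le ht0]; exact Icc_subset_Icc le_rfl ht1
  have hsubIcc : Icc (0:ℝ) t ⊆ Icc 0 1 := Icc_subset_Icc le_rfl ht1
  have hp' : IntegrableOn p (Ioc 0 t) volume := (hp.mono_set hsub).1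
  have hq' : IntegrableOn q (Ioc 0 t) volume := (hq.mono_set hsub).1
  -- integrability of products
  have hpv : IntervalIntegrable (fun s => p s * v s) volume 0 t :=
    (hp.mono_set hsub).mul_continuousOn (by rw [uIcc_of_le ht0]; exact hvcont.mono hsubIcc)
  have huq : IntervalIntegrable (fun s => u s * q s) volume 0 t :=
    (hq.mono_set hsub).continuousOn_mul (by rw [uIcc_of_le ht0]; exact hucont.mono hsubIcc)
  -- the values of u, v and of the primitives
  have hu' : ∀ r ∈ Icc (0:ℝ) t, u r = a + ∫ s in Ioc 0 r, p s := by
    intro r hr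
    rw [hu r (hsubIcc hr), intervalIntegral.integral_of_le hr.1]
  have hv' : ∀ r ∈ Icc (0:ℝ) t, v r = b + ∫ s in Ioc 0 r, q s := by
    intro r hr
    rw [hv r (hsubIcc hr), intervalIntegral.integral_of_le hr.1]
  -- the kernel on the product space
  set F : ℝ × ℝ → ℝ := indicator {z : ℝ × ℝ | z.2 ≤ z.1} (fun z => p z.1 * q z.2) with hF
  have hFint : Integrable F ((volume.restrict (Ioc 0 t)).prod (volume.restrict (Ioc 0 t))) :=
    (hp'.mul_prod hq').indicator (measurableSet_le measurable_snd measurable_fst)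
  -- step 1
  have step1 : ∀ s ∈ Ioc (0:ℝ) t, p s * (v s - b) = ∫ r in Ioc 0 t, F (s, r) := by
    intro s hs
    have hsIcc : s ∈ Icc (0:ℝ) t := ⟨hs.1.le, hs.2⟩
    have h1 : ∀ r : ℝ, F (s, r) = (Iic s).indicator (fun r => p s * q r) r := by
      intro r
      by_cases hrs : r ≤ s
      · simp [hF, indicator_of_mem, hrs, mem_Iic.mpr hrs, Set.indicator_apply]
      · simp [hF, Set.indicator_apply, hrs]
    calc p s * (v s - b) = p s * ∫ r in Ioc 0 s, q r := by rw [hv' s hsIcc]; ring_nf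
    _ = ∫ r in Ioc 0 s, p s * q r := (integral_const_mul _ _).symm
    _ = ∫ r in Ioc 0 t ∩ Iic s, p s * q r := by
        rw [Ioc_inter_Iic, min_eq_right hs.2]
    _ = ∫ r in Ioc 0 t, (Iic s).indicator (fun r => p s * q r) r := by
        rw [setIntegral_indicator measurableSet_Iic]
    _ = ∫ r in Ioc 0 t, F (s, r) := by
        refine setIntegral_congr_fun measurableSet_Ioc (fun r _ => ?_)
        rw [h1 r]
  -- step 2
  have step2 : ∀ r ∈ Ioc (0:ℝ) t, (∫ s in Ioc 0 t, F (s, r)) = (u t - u r) * q r := by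
    intro r hr
    have hrIcc : r ∈ Icc (0:ℝ) t := ⟨hr.1.le, hr.2⟩
    have h1 : ∀ s : ℝ, F (s, r) = (Ici r).indicator (fun s => p s * q r) s := by
      intro s
      by_cases hrs : r ≤ s
      · simp [hF, Set.indicator_apply, hrs]
      · simp [hF, Set.indicator_apply, hrs]
    have hset : Ioc 0 t ∩ Ici r = Icc r t := by
      ext x
      simp only [mem_inter_iff, mem_Ioc, mem_Ici, mem_Icc]
      constructor
      · rintro ⟨⟨_, hxt⟩, hrx⟩; exact ⟨hrx, hxt⟩
      · rintro ⟨hrx, hxt⟩; exact ⟨⟨lt_of_lt_of_le hr.1 hrx, hxt⟩, hrx⟩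
    have hadd : (∫ s in Ioc 0 r, p s) + (∫ s in Ioc r t, p s) = ∫ s in Ioc 0 t, p s := by
      rw [← setIntegral_union (Ioc_disjoint_Ioc_of_le le_rfl) measurableSet_Ioc
        (hp'.mono_set (Ioc_subset_Ioc_right hr.2)) (hp'.mono_set (Ioc_subset_Ioc_left hr.1.le)),
        Ioc_union_Ioc_eq_Ioc hr.1.le hr.2]
    calc (∫ s in Ioc 0 t, F (s, r)) = ∫ s in Ioc 0 t, (Ici r).indicator (fun s => p s * q r) s := by
          refine setIntegral_congr_fun measurableSet_Ioc (fun s _ => ?_)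
          rw [h1 s]
    _ = ∫ s in Ioc 0 t ∩ Ici r, p s * q r := by rw [setIntegral_indicator measurableSet_Ici]
    _ = ∫ s in Ioc r t, p s * q r := by rw [hset, integral_Icc_eq_integral_Ioc]
    _ = (∫ s in Ioc r t, p s) * q r := by rw [integral_mul_const]
    _ = (u t - u r) * q r := by
        rw [hu' t ⟨ht0, le_rfl⟩, hu' r hrIcc]
        rw [← hadd]; ring_nf
  -- swap
  have hswap : (∫ s in Ioc 0 t, ∫ r in Ioc 0 t, F (s, r)) = ∫ r in Ioc 0 t, ∫ s in Ioc 0 t, F (s, r) :=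
    MeasureTheory.integral_integral_swap (f := fun s r => F (s, r)) hFint
  have keyS : (∫ s in Ioc 0 t, p s * (v s - b)) = ∫ r in Ioc 0 t, (u t - u r) * q r := by
    rw [setIntegral_congr_fun measurableSet_Ioc step1, hswap,
      setIntegral_congr_fun measurableSet_Ioc step2]
  -- integrability on Ioc of pieces
  have hpv' : IntegrableOn (fun s => p s * v s) (Ioc 0 t) volume := hpv.1
  have huq' : IntegrableOn (fun s => u s * q s) (Ioc 0 t) volume := huq.1
  have hpvb : IntegrableOn (fun s => p s * (v s - b)) (Ioc 0 t) volume := by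
    have : (fun s => p s * (v s - b)) = fun s => p s * v s - p s * b := by
      funext s; ring
    rw [this]
    exact hpv'.sub (hp'.mul_const b)
  have hutq : IntegrableOn (fun r => (u t - u r) * q r) (Ioc 0 t) volume := by
    have : (fun r => (u t - u r) * q r) = fun r => u t * q r - u r * q r := by
      funext r; ring
    rw [this]
    exact (hq'.const_mul (u t)).sub huq'
  -- put everything together
  have e1 : (∫ s in Ioc 0 t, p s * v s) = (∫ s in Ioc 0 t, p s * (v s - b)) + b * (u t - a) := by
    have : (∫ s in Ioc 0 t, p s * v s) = (∫ s in Ioc 0 t, (p s * (v s - b) + b * p s)) := by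
      refine setIntegral_congr_fun measurableSet_Ioc (fun s _ => ?_)
      ring
    rw [this, integral_add hpvb (hp'.const_mul b), integral_const_mul _ _]
    have hut : u t = a + ∫ s in Ioc 0 t, p s := hu' t ⟨ht0, le_rfl⟩
    rw [hut]; ring
  have e2 : (∫ r in Ioc 0 t, u r * q r)
      = u t * (v t - b) - ∫ r in Ioc 0 t, (u t - u r) * q r := by
    have : (∫ r in Ioc 0 t, u r * q r)
        = ∫ r in Ioc 0 t, (u t * q r - (u t - u r) * q r) := by
      refine setIntegral_congr_fun measurableSet_Ioc (fun r _ => ?_)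
      ring
    rw [this, integral_sub (hq'.const_mul (u t)) hutq, integral_const_mul _ _]
    have hvt : v t = b + ∫ r in Ioc 0 t, q r := hv' t ⟨ht0, le_rfl⟩
    rw [hvt]; ring
  rw [intervalIntegral.integral_of_le ht0,
    integral_add hpv' huq', e1, e2, keyS]
  ring

lemma pow_rep_aux (k : ℝ → ℝ) (hk : IntervalIntegrable k volume 0 1) (n : ℕ) :
    ∀ t ∈ Icc (0:ℝ) 1, (∫ s in (0:ℝ)..t, k s) ^ (n + 1)
      = ∫ s in (0:ℝ)..t, k s * (((n : ℝ) + 1) * (∫ r in (0:ℝ)..s, k r) ^ n) := by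
  have huIcc : uIcc (0:ℝ) 1 = Icc 0 1 := uIcc_of_le zero_le_one
  set G : ℝ → ℝ := fun t => ∫ s in (0:ℝ)..t, k s with hG
  have hGcont : ContinuousOn G (uIcc (0:ℝ) 1) :=
    intervalIntegral.continuousOn_primitive_interval' hk (left_mem_uIcc (a := (0:ℝ)) (b := 1))
  induction n with
  | zero =>
    intro t ht
    simp only [Nat.cast_zero, zero_add, pow_zero, mul_one, pow_one, one_mul]
  | succ n ih =>
    have hkGn : IntervalIntegrable (fun s => k s * (((n : ℝ) + 1) * G s ^ n)) volume 0 1 :=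
      hk.mul_continuousOn (continuousOn_const.mul (hGcont.pow n))
    have key := prod_rule_aux (fun s => k s * (((n : ℝ) + 1) * G s ^ n)) k
      (fun t => G t ^ (n + 1)) G 0 0 hkGn hk
      (fun t ht => by rw [zero_add]; exact ih t ht)
      (fun t ht => by rw [zero_add])
    intro t ht
    have h2 := key t ht
    rw [mul_zero, zero_add] at h2
    calc G t ^ (n + 1 + 1) = G t ^ (n + 1) * G t := by rw [pow_succ]
    _ = ∫ s in (0:ℝ)..t, (k s * (((n : ℝ) + 1) * G s ^ n) * G s + G s ^ (n + 1) * k s) := h2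
    _ = ∫ s in (0:ℝ)..t, k s * ((((n : ℕ) + 1 : ℕ) + 1 : ℝ) * G s ^ (n + 1)) := by
        refine intervalIntegral.integral_congr (fun s _ => ?_)
        push_cast
        rw [pow_succ]; ring

lemma exp_rep_aux (k : ℝ → ℝ) (hk : IntervalIntegrable k volume 0 1) :
    ∀ t ∈ Icc (0:ℝ) 1, Real.exp (∫ s in (0:ℝ)..t, k s)
      = 1 + ∫ s in (0:ℝ)..t, k s * Real.exp (∫ r in (0:ℝ)..s, k r) := by
  have huIcc : uIcc (0:ℝ) 1 = Icc 0 1 := uIcc_of_le zero_le_one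
  set G : ℝ → ℝ := fun t => ∫ s in (0:ℝ)..t, k s with hG
  have hGcont : ContinuousOn G (Icc (0:ℝ) 1) := by
    have := intervalIntegral.continuousOn_primitive_interval' hk (left_mem_uIcc (a := (0:ℝ)) (b := 1))
    rwa [huIcc] at this
  obtain ⟨C, hC⟩ := (isCompact_Icc (a := (0:ℝ)) (b := 1)).exists_bound_of_continuousOn hGcont
  have hC0 : 0 ≤ C := le_trans (norm_nonneg _) (hC 0 (by constructor <;> norm_num))
  have hexp : ∀ x : ℝ, Real.exp x = ∑' n : ℕ, x ^ n / n ! := by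
    intro x
    rw [Real.exp_eq_exp_ℝ, NormedSpace.exp_eq_tsum_div]
  intro t ht
  obtain ⟨ht0, ht1⟩ := ht
  have hsub : uIcc (0:ℝ) t ⊆ uIcc (0:ℝ) 1 := by
    rw [huIcc, uIcc_of_le ht0]; exact Icc_subset_Icc le_rfl ht1
  set Fn : ℕ → ℝ → ℝ := fun n r => k r * G r ^ n / n ! with hFn
  -- interval-integral values of Fn
  have hFneval : ∀ n : ℕ, (∫ s in (0:ℝ)..t, Fn n s) = G t ^ (n + 1) / (n + 1)! := by
    intro n
    have h1 := pow_rep_aux k hk n t ⟨ht0, ht1⟩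
    have h2 : (∫ s in (0:ℝ)..t, k s * (((n : ℝ) + 1) * G s ^ n))
        = ((n : ℝ) + 1) * ∫ s in (0:ℝ)..t, k s * G s ^ n := by
      rw [← intervalIntegral.integral_const_mul]
      refine intervalIntegral.integral_congr (fun s _ => ?_)
      ring
    have hn1 : ((n : ℝ) + 1) ≠ 0 := by positivity
    have h3 : (∫ s in (0:ℝ)..t, k s * G s ^ n) = G t ^ (n + 1) / ((n : ℝ) + 1) := by
      rw [h1, h2]; field_simp
    calc (∫ s in (0:ℝ)..t, Fn n s) = (∫ s in (0:ℝ)..t, k s * G s ^ n) / n ! := by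
          rw [← intervalIntegral.integral_div]
    _ = G t ^ (n + 1) / (((n : ℝ) + 1) * n !) := by rw [h3, div_div]
    _ = G t ^ (n + 1) / (n + 1)! := by
        rw [Nat.factorial_succ]; push_cast; ring_nf
  -- integrability of each Fn on Ioc 0 t
  have hGu : ContinuousOn G (uIcc (0:ℝ) 1) := by rwa [huIcc]
  have hFnint : ∀ n : ℕ, IntegrableOn (Fn n) (Ioc 0 t) volume := by
    intro n
    have : IntervalIntegrable (Fn n) volume 0 t := by
      have := ((hk.mul_continuousOn (hGu.pow n)).div_const (n ! : ℝ)).mono_set hsub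
      exact this
    exact this.1
  -- summability of the integrals of norms
  have hK : ∀ n : ℕ, (∫ r in Ioc (0:ℝ) t, ‖Fn n r‖) ≤ (C ^ n / n !) * ∫ r in Ioc (0:ℝ) 1, |k r| := by
    intro n
    have hkabs : IntegrableOn (fun r => |k r|) (Ioc 0 1) volume := hk.abs.1
    calc (∫ r in Ioc (0:ℝ) t, ‖Fn n r‖) ≤ ∫ r in Ioc (0:ℝ) t, (C ^ n / n !) * |k r| := by
          refine setIntegral_mono_on (hFnint n).norm
            ((hkabs.mono_set (Ioc_subset_Ioc_right ht1)).const_mul _) measurableSet_Ioc ?_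
          intro r hr
          have hrIcc : r ∈ Icc (0:ℝ) 1 := ⟨hr.1.le, hr.2.trans ht1⟩
          have hGr : |G r| ≤ C := by
            have := hC r hrIcc; rwa [Real.norm_eq_abs] at this
          have : ‖Fn n r‖ = |k r| * |G r| ^ n / n ! := by
            rw [hFn]; simp only [Real.norm_eq_abs, abs_div, abs_mul, abs_pow, Nat.abs_cast]
          rw [this]
          rw [div_mul_eq_mul_div, mul_comm (C ^ n)]
          gcongr
    _ = (C ^ n / n !) * ∫ r in Ioc (0:ℝ) t, |k r| := by rw [integral_const_mul]
    _ ≤ (C ^ n / n !) * ∫ r in Ioc (0:ℝ) 1, |k r| := by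
        refine mul_le_mul_of_nonneg_left ?_ (by positivity)
        exact setIntegral_mono_set hkabs
          (Filter.Eventually.of_forall (fun r => abs_nonneg _))
          (HasSubset.Subset.eventuallyLE (Ioc_subset_Ioc_right ht1))
  have hsum : Summable (fun n : ℕ => ∫ r in Ioc (0:ℝ) t, ‖Fn n r‖) := by
    refine Summable.of_nonneg_of_le (fun n => ?_) (fun n => hK n) ?_
    · exact integral_nonneg (fun r => norm_nonneg _)
    · exact (Real.summable_pow_div_factorial C).mul_right _
  -- swap sum and integral
  have hswap := MeasureTheory.integral_tsum_of_summable_integral_norm hFnint hsum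
  have hpt : ∀ r : ℝ, (∑' n : ℕ, Fn n r) = k r * Real.exp (G r) := by
    intro r
    rw [hexp (G r)]
    rw [← tsum_mul_left]
    refine tsum_congr (fun n => ?_)
    rw [hFn]; ring
  have hintrep : (∫ s in (0:ℝ)..t, k s * Real.exp (G s)) = ∑' n : ℕ, G t ^ (n + 1) / (n + 1)! := by
    rw [intervalIntegral.integral_of_le ht0]
    rw [show (fun s => k s * Real.exp (G s)) = fun s => ∑' n : ℕ, Fn n s from
      funext fun s => (hpt s).symm]
    rw [← hswap]
    refine tsum_congr (fun n => ?_)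
    rw [← intervalIntegral.integral_of_le ht0]
    exact hFneval n
  have hsummand : Summable (fun n : ℕ => G t ^ n / n !) := Real.summable_pow_div_factorial _
  have hfinal : Real.exp (G t) = 1 + ∑' n : ℕ, G t ^ (n + 1) / (n + 1)! := by
    rw [hexp (G t), hsummand.tsum_eq_zero_add]
    simp
  rw [hintrep]
  exact hfinal

set_option maxHeartbeats 1000000 in
/-- Lower bound (4.2) of Lemma 4.2 for the controlled (skeleton) inhibitor equation. -/
theorem stmt_5 (β ζ : ℝ) (hβ : 0 < β) (hζ : 0 < ζ)
    (f : ℝ → ℝ)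
    (hf : IntervalIntegrable f volume 0 1)
    (hf2 : IntervalIntegrable (fun s => f s ^ 2) volume 0 1)
    (h : ℝ → ℝ) (hdef : ∀ t, h t = ∫ s in (0:ℝ)..t, f s)
    (g ξ : ℝ → ℝ)
    (hg : ContinuousOn g (Icc 0 1)) (hgpos : ∀ t ∈ Icc (0:ℝ) 1, 0 ≤ g t)
    (hξ : ContinuousOn ξ (Icc 0 1)) (hξpos : ∀ t ∈ Icc (0:ℝ) 1, 0 < ξ t)
    (hξ0 : ξ 0 = ζ)
    (heq : ∀ t ∈ Icc (0:ℝ) 1,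
      ξ t = ζ + ∫ s in (0:ℝ)..t, (-ξ s + g s * ξ s ^ (-β) + ξ s * f s)) :
    ∀ t ∈ Icc (0:ℝ) 1,
      Real.exp (-t - Real.sqrt (∫ s in (0:ℝ)..1, f s ^ 2)) * ζ ≤ ξ t := by
  have huIcc : uIcc (0:ℝ) 1 = Icc 0 1 := uIcc_of_le zero_le_one
  set I : ℝ := ∫ s in (0:ℝ)..1, f s ^ 2 with hI
  have hI0 : 0 ≤ I := intervalIntegral.integral_nonneg zero_le_one (fun s _ => sq_nonneg _)
  -- the drift
  set F : ℝ → ℝ := fun s => -ξ s + g s * ξ s ^ (-β) + ξ s * f s with hFdef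
  have hξu : ContinuousOn ξ (uIcc (0:ℝ) 1) := by rwa [huIcc]
  have hgu : ContinuousOn g (uIcc (0:ℝ) 1) := by rwa [huIcc]
  have hrpow : ContinuousOn (fun s => ξ s ^ (-β)) (uIcc (0:ℝ) 1) := by
    apply ContinuousOn.rpow_const hξu
    intro x hx
    exact Or.inl (ne_of_gt (hξpos x (by rwa [huIcc] at hx)))
  have hFint : IntervalIntegrable F volume 0 1 := by
    have h1 : IntervalIntegrable (fun s => -ξ s + g s * ξ s ^ (-β)) volume 0 1 :=
      (hξu.neg.add (hgu.mul hrpow)).intervalIntegrable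
    have h2 : IntervalIntegrable (fun s => ξ s * f s) volume 0 1 := hf.continuousOn_mul hξu
    exact h1.add h2
  -- the control kernel and exponential weight
  set k : ℝ → ℝ := fun s => 1 - f s with hkdef
  have hk : IntervalIntegrable k volume 0 1 := intervalIntegrable_const.sub hf
  set E : ℝ → ℝ := fun s => Real.exp (∫ r in (0:ℝ)..s, k r) with hEdef
  have hEpos : ∀ s, 0 < E s := fun s => Real.exp_pos _
  have hEcont : ContinuousOn E (uIcc (0:ℝ) 1) :=
    Real.continuous_exp.comp_continuousOn
      (intervalIntegral.continuousOn_primitive_interval' hk (left_mem_uIcc (a := (0:ℝ)) (b := 1)))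
  have hq : IntervalIntegrable (fun s => k s * E s) volume 0 1 := hk.mul_continuousOn hEcont
  have key := prod_rule_aux F (fun s => k s * E s) ξ E ζ 1 hFint hq
    (fun t ht => heq t ht)
    (fun t ht => exp_rep_aux k hk t ht)
  intro t ht
  obtain ⟨ht0, ht1⟩ := ht
  have hsubIcc : Icc (0:ℝ) t ⊆ Icc 0 1 := Icc_subset_Icc le_rfl ht1
  -- lower bound on ξ t * E t
  have hmain := key t ⟨ht0, ht1⟩
  have hnonneg : 0 ≤ ∫ s in (0:ℝ)..t, (F s * E s + ξ s * (k s * E s)) := by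
    refine intervalIntegral.integral_nonneg ht0 (fun s hs => ?_)
    have hs1 : s ∈ Icc (0:ℝ) 1 := hsubIcc hs
    have hval : F s * E s + ξ s * (k s * E s) = (g s * ξ s ^ (-β)) * E s := by
      rw [hFdef, hkdef]; ring
    rw [hval]
    have : 0 ≤ g s * ξ s ^ (-β) :=
      mul_nonneg (hgpos s hs1) (Real.rpow_pos_of_pos (hξpos s hs1) _).le
    exact mul_nonneg this (hEpos s).le
  have hlow : ζ ≤ ξ t * E t := by
    rw [hmain, mul_one]
    linarith
  -- value of E t
  have hft : IntervalIntegrable f volume 0 t := hf.mono_set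
    (by rw [huIcc, uIcc_of_le ht0]; exact hsubIcc)
  set H : ℝ := ∫ s in (0:ℝ)..t, f s with hH
  have hEt : E t = Real.exp (t - H) := by
    have h1 : (∫ s in (0:ℝ)..t, k s) = t - H := by
      simp only [hkdef]
      rw [intervalIntegral.integral_sub intervalIntegrable_const hft]
      simp [hH]
    simp only [hEdef] at h1 ⊢
    rw [h1]
  -- Cauchy–Schwarz bound |H| ≤ √I
  have hCS : ∀ c : ℝ, 0 < c → |H| ≤ (c * I + 1 / c) / 2 := by
    intro c hc
    have hf2t : IntervalIntegrable (fun s => f s ^ 2) volume 0 t := hf2.mono_set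
      (by rw [huIcc, uIcc_of_le ht0]; exact hsubIcc)
    have habs : |H| ≤ ∫ s in (0:ℝ)..t, |f s| :=
      intervalIntegral.abs_integral_le_integral_abs ht0
    have hbig : IntervalIntegrable (fun s => (c * f s ^ 2 + 1 / c) / 2) volume 0 t :=
      ((hf2t.const_mul c).add intervalIntegrable_const).div_const 2
    have hmono : (∫ s in (0:ℝ)..t, |f s|) ≤ ∫ s in (0:ℝ)..t, (c * f s ^ 2 + 1 / c) / 2 := by
      refine intervalIntegral.integral_mono_on ht0 hft.abs hbig (fun s _ => ?_)
      have h1 : 0 ≤ (c * |f s| - 1) ^ 2 := sq_nonneg _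
      have h2 : |f s| ^ 2 = f s ^ 2 := sq_abs (f s)
      have key2 : 2 * c * |f s| ≤ c ^ 2 * f s ^ 2 + 1 := by nlinarith [h1, h2]
      have h3 : (c * f s ^ 2 + 1 / c) / 2 = (c ^ 2 * f s ^ 2 + 1) / (2 * c) := by
        field_simp
      rw [h3, le_div_iff₀ (by positivity)]
      nlinarith [key2]
    have hval : (∫ s in (0:ℝ)..t, (c * f s ^ 2 + 1 / c) / 2)
        = (c * (∫ s in (0:ℝ)..t, f s ^ 2) + t * (1 / c)) / 2 := by
      rw [intervalIntegral.integral_div, intervalIntegral.integral_add (hf2t.const_mul c)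
        intervalIntegrable_const, intervalIntegral.integral_const_mul,
        intervalIntegral.integral_const]
      simp [smul_eq_mul]
    have hIt : (∫ s in (0:ℝ)..t, f s ^ 2) ≤ I := by
      rw [hI]
      exact intervalIntegral.integral_mono_interval le_rfl ht0 ht1
        (Filter.Eventually.of_forall (fun s => sq_nonneg _)) hf2
    have ht1c : t * (1 / c) ≤ 1 / c := by
      nlinarith [one_div_pos.mpr hc]
    calc |H| ≤ ∫ s in (0:ℝ)..t, (c * f s ^ 2 + 1 / c) / 2 := habs.trans hmono
    _ = (c * (∫ s in (0:ℝ)..t, f s ^ 2) + t * (1 / c)) / 2 := hval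
    _ ≤ (c * I + 1 / c) / 2 := by
        have := mul_le_mul_of_nonneg_left hIt hc.le
        linarith
  have hHle : |H| ≤ Real.sqrt I := by
    rcases eq_or_lt_of_le hI0 with hI0' | hIpos
    · rw [← hI0', Real.sqrt_zero]
      by_contra hcon
      push_neg at hcon
      have hHpos : 0 < |H| := hcon
      have := hCS (1 / |H|) (by positivity)
      rw [← hI0'] at this
      have h1 : (1 : ℝ) / (1 / |H|) = |H| := by field_simp
      rw [h1] at this
      linarith
    · have hs : 0 < Real.sqrt I := Real.sqrt_pos.mpr hIpos
      have := hCS (Real.sqrt I)⁻¹ (by positivity)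
      have h1 : (Real.sqrt I)⁻¹ * I = Real.sqrt I := by
        rw [inv_mul_eq_div, Real.div_sqrt]
      have h2 : 1 / (Real.sqrt I)⁻¹ = Real.sqrt I := by
        rw [one_div, inv_inv]
      rw [h1, h2] at this
      linarith
  -- conclude
  have hξt : ζ * Real.exp (-t + H) ≤ ξ t := by
    have hE : 0 < Real.exp (t - H) := Real.exp_pos _
    rw [hEt] at hlow
    have := (div_le_iff₀ hE).mpr (by linarith [hlow] : ζ ≤ ξ t * Real.exp (t - H))
    calc ζ * Real.exp (-t + H) = ζ / Real.exp (t - H) := by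
          rw [div_eq_mul_inv, ← Real.exp_neg]
          ring_nf
    _ ≤ ξ t := this
  calc Real.exp (-t - Real.sqrt I) * ζ ≤ Real.exp (-t + H) * ζ := by
        refine mul_le_mul_of_nonneg_right (Real.exp_le_exp.mpr ?_) hζ.le
        have := neg_abs_le H
        linarith [hHle]
  _ = ζ * Real.exp (-t + H) := by ring
  _ ≤ ξ t := hξt
end

section
/- Let β > 0. There exists a constant C > 0 depending only on β such that the following holds. Let ζ > 0, let f ∈ L²([0,1];ℝ), set h(t) = ∫₀^t f(s) ds, let g : [0,1] → ℝ be continuous and nonnegative, and let ξ : [0,1] → ℝ be continuous and positive with ξ(0) = ζ satisfying, for every t ∈ [0,1], ξ(t) = ζ + ∫₀^t ( -ξ(s) + g(s) ξ(s)^{-β} + ξ(s) f(s) ) ds. Then for every t ∈ [0,1], ξ(t) ≤ C ( e^{‖f‖_{L²([0,1])}} ζ + e^{2‖f‖_{L²([0,1])}} ( sup_{0≤s≤1} g(s) )^{1/(1+β)} ). -/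
open MeasureTheory Set Real Filter

lemma gronwall_aux (u k : ℝ → ℝ) (a b c : ℝ) (hab : a ≤ b)
    (hu : ContinuousOn u (Icc a b)) (hu0 : ∀ t ∈ Icc a b, 0 ≤ u t)
    (hk0 : ∀ t, 0 ≤ k t)
    (hki : IntervalIntegrable k volume a b)
    (hkui : IntervalIntegrable (fun s => k s * u s) volume a b)
    (hc : 0 ≤ c)
    (hyp : ∀ t ∈ Icc a b, u t ≤ c + ∫ s in a..t, k s * u s) :
    ∀ t ∈ Icc a b, u t ≤ c * Real.exp (∫ s in a..b, k s) := by
  intro t ht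
  have hIcc : Icc a b = uIcc a b := (uIcc_of_le hab).symm
  have hsub : ∀ x ∈ Icc a b, ∀ y ∈ Icc a b, uIcc x y ⊆ uIcc a b := by
    intro x hx y hy
    exact uIcc_subset_uIcc (hIcc ▸ hx) (hIcc ▸ hy)
  have hkix : ∀ x ∈ Icc a b, ∀ y ∈ Icc a b, IntervalIntegrable k volume x y :=
    fun x hx y hy => hki.mono_set (hsub x hx y hy)
  have hkuix : ∀ x ∈ Icc a b, ∀ y ∈ Icc a b,
      IntervalIntegrable (fun s => k s * u s) volume x y :=
    fun x hx y hy => hkui.mono_set (hsub x hx y hy)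
  set P : ℝ → ℝ := fun x => ∫ s in a..x, k s with hPdef
  set A₀ : ℝ := ∫ s in a..b, k s with hA₀def
  have hPa : P a = 0 := intervalIntegral.integral_same
  have hPb : P b = A₀ := rfl
  have hPcont : ContinuousOn P (Icc a b) := by
    rw [hIcc]
    exact intervalIntegral.continuousOn_primitive_interval
      ((intervalIntegrable_iff_integrableOn_Icc_of_le hab).mp hki |>.mono_set
        (by rw [uIcc_of_le hab]))
  have hPdiff : ∀ x ∈ Icc a b, ∀ y ∈ Icc a b, P y - P x = ∫ s in x..y, k s := by
    intro x hx y hy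
    have := intervalIntegral.integral_add_adjacent_intervals
      (hkix a ⟨le_rfl, hab⟩ x hx) (hkix x hx y hy)
    simp only [hPdef]
    linarith
  have hPmono : ∀ x ∈ Icc a b, ∀ y ∈ Icc a b, x ≤ y → P x ≤ P y := by
    intro x hx y hy hxy
    have h1 := hPdiff x hx y hy
    have h2 : (0:ℝ) ≤ ∫ s in x..y, k s :=
      intervalIntegral.integral_nonneg hxy (fun s _ => hk0 s)
    linarith
  have hP0 : ∀ x ∈ Icc a b, 0 ≤ P x := by
    intro x hx
    have := hPmono a ⟨le_rfl, hab⟩ x hx hx.1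
    rw [hPa] at this; exact this
  have hA₀0 : 0 ≤ A₀ := by rw [← hPb]; exact hP0 b ⟨hab, le_rfl⟩
  -- Q-integral difference for k*u
  have hQdiff : ∀ x ∈ Icc a b, ∀ y ∈ Icc a b,
      (∫ s in a..y, k s * u s) - (∫ s in a..x, k s * u s) = ∫ s in x..y, k s * u s := by
    intro x hx y hy
    have := intervalIntegral.integral_add_adjacent_intervals
      (hkuix a ⟨le_rfl, hab⟩ x hx) (hkuix x hx y hy)
    linarith
  -- local bound: ∫ x..y k*u ≤ (P y - P x) * B  whenever u ≤ B on [x,y]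
  have hloc : ∀ x ∈ Icc a b, ∀ y ∈ Icc a b, x ≤ y → ∀ B, 0 ≤ B →
      (∀ s ∈ Icc x y, u s ≤ B) → (∫ s in x..y, k s * u s) ≤ (P y - P x) * B := by
    intro x hx y hy hxy B hB hBs
    have h1 : (∫ s in x..y, k s * u s) ≤ ∫ s in x..y, k s * B := by
      apply intervalIntegral.integral_mono_on hxy (hkuix x hx y hy)
        ((hkix x hx y hy).mul_const B)
      intro s hs
      exact mul_le_mul_of_nonneg_left (hBs s hs) (hk0 s)
    have h2 : (∫ s in x..y, k s * B) = (P y - P x) * B := by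
      rw [intervalIntegral.integral_mul_const, hPdiff x hx y hy]
    linarith
  -- the degenerate case A₀ = 0
  rcases eq_or_lt_of_le hA₀0 with hA₀eq | hA₀pos
  · -- A₀ = 0
    obtain ⟨x₀, hx₀mem, hx₀max⟩ := isCompact_Icc.exists_isMaxOn
      (s := Icc a b) (nonempty_Icc.mpr hab) hu
    have hB : 0 ≤ u x₀ := hu0 x₀ hx₀mem
    have hPt0 : P t = 0 := le_antisymm (by
        have := hPmono t ht b ⟨hab, le_rfl⟩ ht.2
        rw [hPb, ← hA₀eq] at this; exact this) (hP0 t ht)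
    have h1 := hloc a ⟨le_rfl, hab⟩ t ht ht.1 (u x₀) hB
      (fun s hs => hx₀max ⟨hs.1, hs.2.trans ht.2⟩)
    rw [hPa, hPt0] at h1
    have h2 := hyp t ht
    nlinarith [Real.one_le_exp hA₀0, Real.exp_pos A₀]
  -- main per-n bound
  have key : ∀ n : ℕ, A₀ < n → u t ≤ c * ((1 - A₀ / n)⁻¹) ^ n := by
    intro n hn
    have hnpos : 0 < (n:ℝ) := lt_of_le_of_lt hA₀0 hn
    set ε : ℝ := A₀ / n with hεdef
    have hε0 : 0 < ε := div_pos hA₀pos hnpos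
    have hε1 : ε < 1 := (div_lt_one hnpos).mpr hn
    set r : ℝ := (1 - ε)⁻¹ with hrdef
    have h1ε : 0 < 1 - ε := by linarith
    have hr0 : 0 < r := inv_pos.mpr h1ε
    have hr1 : 1 ≤ r := one_le_inv_iff₀.mpr ⟨h1ε, by linarith⟩
    have hrε : r * (1 - ε) = 1 := inv_mul_cancel₀ h1ε.ne'
    -- choose partition points
    have hIVT : ∀ i : ℕ, ∃ x, ((i:ℝ) * ε ≤ A₀ → x ∈ Icc a b ∧ P x = i * ε) := by
      intro i
      by_cases hi : (i:ℝ) * ε ≤ A₀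
      · have hmem : (i:ℝ) * ε ∈ Icc (P a) (P b) := by
          rw [hPa, hPb]
          exact ⟨mul_nonneg (Nat.cast_nonneg i) hε0.le, hi⟩
        obtain ⟨x, hx1, hx2⟩ := intermediate_value_Icc hab hPcont hmem
        exact ⟨x, fun _ => ⟨hx1, hx2⟩⟩
      · exact ⟨a, fun h => absurd h hi⟩
    choose σ0 hσ0 using hIVT
    set σ : ℕ → ℝ := fun i => if i < n then σ0 i else b with hσdef
    have hσmem : ∀ i, i ≤ n → σ i ∈ Icc a b ∧ P (σ i) = i * ε := by
      intro i hi
      by_cases h : i < n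
      · simp only [hσdef, if_pos h]
        apply hσ0 i
        calc (i:ℝ) * ε ≤ n * ε := by
              apply mul_le_mul_of_nonneg_right _ hε0.le
              exact_mod_cast hi
          _ = A₀ := by rw [hεdef]; field_simp [hnpos.ne']
      · have hin : i = n := le_antisymm hi (not_lt.mp h)
        subst hin
        simp only [hσdef, if_neg h]
        refine ⟨⟨hab, le_rfl⟩, ?_⟩
        rw [hPb, hεdef]
        field_simp
    -- Q induction
    have Q : ∀ i, i ≤ n → c + (∫ s in a..σ i, k s * u s) ≤ c * r ^ i := by
      intro i
      induction i with
      | zero =>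
        intro _
        have hm := hσmem 0 (Nat.zero_le n)
        have hP0' : P (σ 0) = 0 := by simpa using hm.2
        -- sup bound on [a, σ 0]
        obtain ⟨x₀, hx₀mem, hx₀max⟩ := isCompact_Icc.exists_isMaxOn
          (s := Icc a (σ 0)) (nonempty_Icc.mpr hm.1.1) (hu.mono (Icc_subset_Icc le_rfl hm.1.2))
        have hx₀' : x₀ ∈ Icc a b := (Icc_subset_Icc le_rfl hm.1.2) hx₀mem
        have hB : 0 ≤ u x₀ := hu0 x₀ hx₀'
        have := hloc a ⟨le_rfl, hab⟩ (σ 0) hm.1 hm.1.1 (u x₀) hB (fun s hs => hx₀max hs)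
        rw [hPa, hP0'] at this
        simp only [pow_zero, mul_one]
        have h0 : (∫ s in a..σ 0, k s * u s) ≤ 0 := by
          calc (∫ s in a..σ 0, k s * u s) ≤ (0 - 0) * u x₀ := this
            _ = 0 := by ring
        linarith
      | succ i ih =>
        intro hi1
        have hii : i ≤ n := le_trans (Nat.le_succ i) hi1
        have qi := ih hii
        obtain ⟨hmi, hpi⟩ := hσmem i hii
        obtain ⟨hmi1, hpi1⟩ := hσmem (i+1) hi1
        -- σ i ≤ σ (i+1)
        have hσle : σ i ≤ σ (i+1) := by
          by_contra hcon
          push_neg at hcon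
          have := hPmono (σ (i+1)) hmi1 (σ i) hmi hcon.le
          rw [hpi, hpi1] at this
          push_cast at this
          nlinarith
        -- max point on [σ i, σ (i+1)]
        have hJsub : Icc (σ i) (σ (i+1)) ⊆ Icc a b := Icc_subset_Icc hmi.1 hmi1.2
        obtain ⟨x₁, hx₁mem, hx₁max⟩ := isCompact_Icc.exists_isMaxOn
          (s := Icc (σ i) (σ (i+1))) (nonempty_Icc.mpr hσle) (hu.mono hJsub)
        have hx₁' : x₁ ∈ Icc a b := hJsub hx₁mem
        have hB : 0 ≤ u x₁ := hu0 x₁ hx₁'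
        -- step bound for any x in the subinterval
        have hstep : ∀ x ∈ Icc (σ i) (σ (i+1)),
            (∫ s in a..x, k s * u s) ≤ (∫ s in a..σ i, k s * u s) + ε * u x₁ := by
          intro x hx
          have hxm : x ∈ Icc a b := hJsub hx
          have hsplit := hQdiff (σ i) hmi x hxm
          have hl := hloc (σ i) hmi x hxm hx.1 (u x₁) hB
            (fun s hs => hx₁max ⟨hs.1, le_trans hs.2 hx.2⟩)
          have hPx : P x ≤ P (σ (i+1)) := hPmono x hxm (σ (i+1)) hmi1 hx.2
          have hPd : P x - P (σ i) ≤ ε := by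
            rw [hpi] at *
            have : P (σ (i+1)) = (i:ℝ) * ε + ε := by rw [hpi1]; push_cast; ring
            linarith
          nlinarith [mul_le_mul_of_nonneg_right hPd hB]
        -- bound u x₁
        have hux₁ : u x₁ ≤ c * r ^ (i + 1) := by
          have h1 := hyp x₁ hx₁'
          have h2 := hstep x₁ hx₁mem
          have h3 : u x₁ * (1 - ε) ≤ c * r ^ i := by linarith
          have h4 : u x₁ * ((1 - ε) * r) ≤ c * r ^ i * r :=
            mul_le_mul_of_nonneg_right h3 hr0.le |>.trans_eq' (by ring)
          rw [mul_comm (1 - ε) r, hrε, mul_one] at h4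
          calc u x₁ ≤ c * r ^ i * r := h4
            _ = c * r ^ (i+1) := by ring
        -- conclude Q (i+1)
        have h5 := hstep (σ (i+1)) (right_mem_Icc.mpr hσle)
        have h6 : ε * u x₁ ≤ ε * (c * r ^ (i+1)) :=
          mul_le_mul_of_nonneg_left hux₁ hε0.le
        have h7 : c * r ^ i + ε * (c * r ^ (i+1)) = c * r ^ (i+1) := by
          have : (r:ℝ) ^ i = r ^ (i+1) * (1 - ε) := by
            rw [pow_succ, mul_assoc, hrε, mul_one]
          rw [this]; ring
        calc c + (∫ s in a..σ (i+1), k s * u s)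
            ≤ c + (∫ s in a..σ i, k s * u s) + ε * u x₁ := by linarith
          _ ≤ c * r ^ i + ε * (c * r ^ (i+1)) := by linarith
          _ = c * r ^ (i+1) := h7
    -- conclude for this n
    have hσn : σ n = b := by simp [hσdef]
    have hQn := Q n le_rfl
    rw [hσn] at hQn
    have hmono : (∫ s in a..t, k s * u s) ≤ ∫ s in a..b, k s * u s := by
      have := hQdiff t ht b ⟨hab, le_rfl⟩
      have h2 : (0:ℝ) ≤ ∫ s in t..b, k s * u s := by
        apply intervalIntegral.integral_nonneg ht.2
        intro s hs
        exact mul_nonneg (hk0 s) (hu0 s ⟨le_trans ht.1 hs.1, hs.2⟩)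
      linarith
    have := hyp t ht
    calc u t ≤ c + ∫ s in a..t, k s * u s := this
      _ ≤ c + ∫ s in a..b, k s * u s := by linarith
      _ ≤ c * r ^ n := hQn
      _ = c * ((1 - A₀ / n)⁻¹) ^ n := rfl
  -- limit n → ∞
  have hlim : Tendsto (fun n : ℕ => c * ((1 - A₀ / n)⁻¹) ^ n) atTop
      (nhds (c * Real.exp A₀)) := by
    have h1 := Real.tendsto_one_add_div_pow_exp (-A₀)
    have h1' : Tendsto (fun n : ℕ => (1 - A₀ / n) ^ n) atTop (nhds (Real.exp (-A₀))) := by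
      refine h1.congr (fun n => ?_)
      congr 1
      ring
    have h2 : Tendsto (fun n : ℕ => ((1 - A₀ / n) ^ n)⁻¹) atTop
        (nhds (Real.exp (-A₀))⁻¹) := h1'.inv₀ (Real.exp_ne_zero _)
    rw [← Real.exp_neg, neg_neg] at h2
    have h3 : Tendsto (fun n : ℕ => ((1 - A₀ / n)⁻¹) ^ n) atTop (nhds (Real.exp A₀)) := by
      refine h2.congr (fun n => ?_)
      rw [inv_pow]
    exact h3.const_mul c
  refine ge_of_tendsto hlim ?_
  obtain ⟨m, hm⟩ := exists_nat_gt A₀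
  rw [Filter.eventually_atTop]
  exact ⟨m, fun n hn => key n (lt_of_lt_of_le hm (Nat.cast_le.mpr hn))⟩

/-- Upper bound (4.3) of Lemma 4.2 for the controlled (skeleton) inhibitor equation. -/
theorem stmt_6 (β : ℝ) (hβ : 0 < β) :
    ∃ C > (0:ℝ), ∀ (ζ : ℝ), 0 < ζ → ∀ (f : ℝ → ℝ),
      IntervalIntegrable f volume 0 1 →
      IntervalIntegrable (fun s => f s ^ 2) volume 0 1 →
      ∀ (h : ℝ → ℝ), (∀ t, h t = ∫ s in (0:ℝ)..t, f s) →
      ∀ (g ξ : ℝ → ℝ),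
      ContinuousOn g (Icc 0 1) → (∀ t ∈ Icc (0:ℝ) 1, 0 ≤ g t) →
      ContinuousOn ξ (Icc 0 1) → (∀ t ∈ Icc (0:ℝ) 1, 0 < ξ t) →
      ξ 0 = ζ →
      (∀ t ∈ Icc (0:ℝ) 1,
        ξ t = ζ + ∫ s in (0:ℝ)..t, (-ξ s + g s * ξ s ^ (-β) + ξ s * f s)) →
      ∀ t ∈ Icc (0:ℝ) 1,
        ξ t ≤ C * (Real.exp (Real.sqrt (∫ s in (0:ℝ)..1, f s ^ 2)) * ζ
          + Real.exp (2 * Real.sqrt (∫ s in (0:ℝ)..1, f s ^ 2))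
              * (sSup (g '' Icc (0:ℝ) 1)) ^ (1 / (1 + β))) := by
  refine ⟨1, one_pos, ?_⟩
  intro ζ hζ f hf hf2 h hh g ξ hg hg0 hξc hξpos hξ0 heq t ht
  rw [one_mul]
  set N := Real.sqrt (∫ s in (0:ℝ)..1, f s ^ 2) with hNdef
  have hN0 : 0 ≤ N := Real.sqrt_nonneg _
  set M := sSup (g '' Icc (0:ℝ) 1) with hMdef
  have hbddg : BddAbove (g '' Icc (0:ℝ) 1) :=
    (isCompact_Icc.image_of_continuousOn hg).bddAbove
  have hgM : ∀ s ∈ Icc (0:ℝ) 1, g s ≤ M := fun s hs => le_csSup hbddg ⟨s, hs, rfl⟩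
  have h01 : (0:ℝ) ∈ Icc (0:ℝ) 1 := ⟨le_rfl, zero_le_one⟩
  have hM0 : 0 ≤ M := le_trans (hg0 0 h01) (hgM 0 h01)
  set K := M ^ (1/(1+β)) with hKdef
  have hK0 : 0 ≤ K := Real.rpow_nonneg hM0 _
  -- Step A : ∫ 0..1 |f| ≤ N
  have habs : IntervalIntegrable (fun s => |f s|) volume 0 1 := hf.abs
  have hI2 : (0:ℝ) ≤ ∫ s in (0:ℝ)..1, f s ^ 2 :=
    intervalIntegral.integral_nonneg zero_le_one (fun s _ => sq_nonneg _)
  have hN2 : N ^ 2 = ∫ s in (0:ℝ)..1, f s ^ 2 := Real.sq_sqrt hI2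
  have hkey : ∀ l : ℝ, 0 < l →
      (∫ s in (0:ℝ)..1, |f s|) ≤ (l + (∫ s in (0:ℝ)..1, f s ^ 2)/l)/2 := by
    intro l hl
    have h1 : (∫ s in (0:ℝ)..1, |f s|) ≤ ∫ s in (0:ℝ)..1, (l + f s ^ 2 / l)/2 := by
      apply intervalIntegral.integral_mono_on zero_le_one habs
        ((intervalIntegrable_const.add (hf2.div_const l)).div_const 2)
      intro s _
      rw [le_div_iff₀ (by norm_num : (0:ℝ) < 2), ← sub_nonneg]
      have h3 : l + f s ^ 2 / l - |f s| * 2 = (l - |f s|)^2 / l := by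
        rw [← sq_abs (f s)]
        field_simp
        rw [sub_sq, sq_abs]
        ring
      rw [h3]
      positivity
    have h2 : (∫ s in (0:ℝ)..1, (l + f s ^ 2 / l)/2)
        = (l + (∫ s in (0:ℝ)..1, f s ^ 2)/l)/2 := by
      rw [intervalIntegral.integral_div, intervalIntegral.integral_add
        intervalIntegrable_const (hf2.div_const l), intervalIntegral.integral_div,
        intervalIntegral.integral_const]
      simp
    linarith [h2 ▸ h1]
  have hfN : (∫ s in (0:ℝ)..1, |f s|) ≤ N := by
    rcases eq_or_lt_of_le hN0 with h0 | hpos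
    · have hI20 : (∫ s in (0:ℝ)..1, f s ^ 2) = 0 := by
        rw [← hN2, ← h0]; ring
      by_contra hcon
      push_neg at hcon
      have habs0 : 0 < ∫ s in (0:ℝ)..1, |f s| := by linarith
      have := hkey (∫ s in (0:ℝ)..1, |f s|) habs0
      rw [hI20, zero_div] at this
      linarith
    · have := hkey N hpos
      rw [← hN2] at this
      have hNN : N + N ^ 2 / N = 2 * N := by field_simp; ring
      rw [hNN] at this
      linarith
  -- integrability of G
  set G : ℝ → ℝ := fun s => -ξ s + g s * ξ s ^ (-β) + ξ s * f s with hGdef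
  have huIcc : uIcc (0:ℝ) 1 = Icc 0 1 := uIcc_of_le zero_le_one
  have hξI : ContinuousOn (fun s => ξ s ^ (-β)) (Icc (0:ℝ) 1) :=
    hξc.rpow_const (fun s hs => Or.inl (hξpos s hs).ne')
  have hGint : IntervalIntegrable G volume 0 1 := by
    have h1 : IntervalIntegrable (fun s => -ξ s + g s * ξ s ^ (-β)) volume 0 1 := by
      apply ContinuousOn.intervalIntegrable
      rw [huIcc]
      exact (hξc.neg).add (hg.mul hξI)
    have h2 : IntervalIntegrable (fun s => ξ s * f s) volume 0 1 := by
      have := hf.continuousOn_mul (g := ξ) (by rw [huIcc]; exact hξc)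
      exact this
    exact h1.add h2
  have hsub01 : ∀ x ∈ Icc (0:ℝ) 1, ∀ y ∈ Icc (0:ℝ) 1, uIcc x y ⊆ uIcc (0:ℝ) 1 :=
    fun x hx y hy => uIcc_subset_uIcc (huIcc ▸ hx) (huIcc ▸ hy)
  have heq' : ∀ x ∈ Icc (0:ℝ) 1, ∀ y ∈ Icc (0:ℝ) 1,
      ξ y = ξ x + ∫ s in x..y, G s := by
    intro x hx y hy
    have e1 := heq x hx
    have e2 := heq y hy
    have hadd := intervalIntegral.integral_add_adjacent_intervals
      (hGint.mono_set (hsub01 0 h01 x hx)) (hGint.mono_set (hsub01 x hx y hy))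
    simp only [hGdef] at *
    linarith
  -- threshold time
  have ht01 : t ∈ Icc (0:ℝ) 1 := ht
  set Sset : Set ℝ := insert (0:ℝ) {s ∈ Icc 0 t | ξ s ≤ K} with hSdef
  have hSclosed : IsClosed Sset := by
    rw [hSdef, Set.insert_eq]
    apply IsClosed.union isClosed_singleton
    have : {s ∈ Icc 0 t | ξ s ≤ K} = Icc 0 t ∩ ξ ⁻¹' (Iic K) := by
      ext s; exact ⟨fun hs => ⟨hs.1, hs.2⟩, fun hs => ⟨hs.1, hs.2⟩⟩
    rw [this]
    exact ContinuousOn.preimage_isClosed_of_isClosed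
      (hξc.mono (Icc_subset_Icc le_rfl ht.2)) isClosed_Icc isClosed_Iic
  have hSne : Sset.Nonempty := ⟨0, mem_insert _ _⟩
  have hSsub : Sset ⊆ Icc 0 t := by
    rintro x (rfl | hx)
    · exact ⟨le_rfl, ht.1⟩
    · exact hx.1
  have hSbdd : BddAbove Sset := ⟨t, fun x hx => (hSsub hx).2⟩
  set t₀ := sSup Sset with ht₀def
  have ht₀mem : t₀ ∈ Sset := hSclosed.csSup_mem hSne hSbdd
  have ht₀Icc : t₀ ∈ Icc 0 t := hSsub ht₀mem
  have ht₀I : t₀ ∈ Icc (0:ℝ) 1 := ⟨ht₀Icc.1, ht₀Icc.2.trans ht.2⟩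
  have ht₀ub : ∀ s ∈ Sset, s ≤ t₀ := fun s hs => le_csSup hSbdd hs
  have hgtK : ∀ s, t₀ < s → s ≤ t → K < ξ s := by
    intro s h1 h2
    by_contra hcon
    push_neg at hcon
    have hmem : s ∈ Sset := Or.inr ⟨⟨ht₀Icc.1.trans h1.le, h2⟩, hcon⟩
    exact absurd (ht₀ub s hmem) (not_le.mpr h1)
  have hξt₀ : ξ t₀ ≤ max ζ K := by
    rcases mem_insert_iff.mp ht₀mem with h0' | hm
    · rw [h0', hξ0]; exact le_max_left _ _
    · exact le_trans hm.2 (le_max_right _ _)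
  -- pointwise bound on (t₀, t]
  have hb1 : (0:ℝ) < 1 + β := by linarith
  have hpt : ∀ s, t₀ < s → s ≤ t → G s ≤ |f s| * ξ s := by
    intro s h1 h2
    have hsI : s ∈ Icc (0:ℝ) 1 := ⟨ht₀Icc.1.trans h1.le, h2.trans ht.2⟩
    have hξs := hξpos s hsI
    have hKs := hgtK s h1 h2
    have hg_le : g s * ξ s ^ (-β) ≤ ξ s := by
      rcases eq_or_lt_of_le hM0 with hM0' | hMpos
      · have hgs0 : g s = 0 := le_antisymm (hM0' ▸ hgM s hsI) (hg0 s hsI)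
        rw [hgs0, zero_mul]
        exact hξs.le
      · have hKpos : 0 < K := Real.rpow_pos_of_pos hMpos _
        have hmono : ξ s ^ (-β) ≤ K ^ (-β) :=
          Real.rpow_le_rpow_of_nonpos hKpos hKs.le (neg_nonpos.mpr hβ.le)
        have hMK : M * K ^ (-β) = K := by
          rw [hKdef, ← Real.rpow_mul hM0]
          nth_rewrite 1 [← Real.rpow_one M]
          rw [← Real.rpow_add hMpos]
          congr 1
          field_simp
          ring
        calc g s * ξ s ^ (-β) ≤ M * K ^ (-β) := by
              apply mul_le_mul (hgM s hsI) hmono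
                (Real.rpow_nonneg hξs.le _) hM0
          _ = K := hMK
          _ ≤ ξ s := hKs.le
    have hξf : ξ s * f s ≤ |f s| * ξ s := by
      rw [mul_comm (ξ s) (f s)]
      exact mul_le_mul_of_nonneg_right (le_abs_self _) hξs.le
    simp only [hGdef]
    linarith
  -- Gronwall hypothesis on [t₀, t]
  have hξabs_int : ∀ x ∈ Icc t₀ t,
      IntervalIntegrable (fun s => |f s| * ξ s) volume t₀ x := by
    intro x hx
    have hxI : x ∈ Icc (0:ℝ) 1 := ⟨ht₀Icc.1.trans hx.1, hx.2.trans ht.2⟩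
    exact (habs.mono_set (hsub01 t₀ ht₀I x hxI)).mul_continuousOn
      (hξc.mono ((hsub01 t₀ ht₀I x hxI).trans huIcc.subset))
  have hgw : ∀ x ∈ Icc t₀ t, ξ x ≤ max ζ K + ∫ s in t₀..x, |f s| * ξ s := by
    intro x hx
    have hxI : x ∈ Icc (0:ℝ) 1 := ⟨ht₀Icc.1.trans hx.1, hx.2.trans ht.2⟩
    have e := heq' t₀ ht₀I x hxI
    have hmono : (∫ s in t₀..x, G s) ≤ ∫ s in t₀..x, |f s| * ξ s := by
      apply intervalIntegral.integral_mono_ae_restrict hx.1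
        (hGint.mono_set (hsub01 t₀ ht₀I x hxI)) (hξabs_int x hx)
      have hmem : ∀ᵐ s ∂(volume.restrict (Icc t₀ x)), s ∈ Icc t₀ x :=
        ae_restrict_mem measurableSet_Icc
      have hne : ∀ᵐ s ∂(volume.restrict (Icc t₀ x)), s ≠ t₀ := by
        rw [ae_iff]
        have : {s | ¬ s ≠ t₀} = {t₀} := by ext s; simp
        rw [this, Measure.restrict_apply (measurableSet_singleton _)]
        exact le_antisymm (le_trans (measure_mono Set.inter_subset_left)
          (le_of_eq (Real.volume_singleton))) zero_le
      filter_upwards [hmem, hne] with s hs hs'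
      exact hpt s (lt_of_le_of_ne hs.1 (Ne.symm hs')) (hs.2.trans hx.2)
    rw [e]
    linarith
  -- apply Gronwall
  have hmaxpos : 0 ≤ max ζ K := le_trans hζ.le (le_max_left _ _)
  have gw := gronwall_aux ξ (fun s => |f s|) t₀ t (max ζ K) ht₀Icc.2
    (hξc.mono (Icc_subset_Icc ht₀I.1 ht.2))
    (fun s hs => (hξpos s ⟨ht₀I.1.trans hs.1, hs.2.trans ht.2⟩).le)
    (fun s => abs_nonneg _)
    (habs.mono_set (hsub01 t₀ ht₀I t ht01))
    (hξabs_int t (right_mem_Icc.mpr ht₀Icc.2))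
    hmaxpos hgw t (right_mem_Icc.mpr ht₀Icc.2)
  -- final estimate
  have hint_le : (∫ s in t₀..t, |f s|) ≤ N := by
    calc (∫ s in t₀..t, |f s|) ≤ ∫ s in (0:ℝ)..1, |f s| := by
          apply intervalIntegral.integral_mono_interval ht₀I.1 ht₀Icc.2 ht.2
            (Filter.Eventually.of_forall (fun s => abs_nonneg _)) habs
      _ ≤ N := hfN
  have hexp1 : Real.exp (∫ s in t₀..t, |f s|) ≤ Real.exp N := Real.exp_le_exp.mpr hint_le
  have hfinal : ξ t ≤ max ζ K * Real.exp N :=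
    le_trans gw (mul_le_mul_of_nonneg_left hexp1 hmaxpos)
  have hexpN : Real.exp N ≤ Real.exp (2 * N) := Real.exp_le_exp.mpr (by linarith)
  have hmaxle : max ζ K ≤ ζ + K :=
    max_le (le_add_of_nonneg_right hK0) (le_add_of_nonneg_left hζ.le)
  calc ξ t ≤ max ζ K * Real.exp N := hfinal
    _ ≤ (ζ + K) * Real.exp N :=
        mul_le_mul_of_nonneg_right hmaxle (Real.exp_pos _).le
    _ = Real.exp N * ζ + Real.exp N * K := by ring
    _ ≤ Real.exp N * ζ + Real.exp (2*N) * K := by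
        have := mul_le_mul_of_nonneg_right hexpN hK0
        linarith
end

section
/- Let β > 0, ζ > 0, N > 0 and 0 < ε with εβ < 2. Let b : [0,1] → ℝ be continuous with b(0) = 0, let f ∈ L²([0,1];ℝ) with ‖f‖_{L²([0,1])} ≤ N, set h(t) = ∫₀^t f(s) ds, let g : [0,1] → ℝ be continuous and nonnegative, and let ξ : [0,1] → ℝ be continuous and positive such that for every t ∈ [0,1], ξ(t)^{1+β} = e^{-(1+β)(2-εβ)t/2 + (1+β)h(t) + √ε(1+β)b(t)} ζ^{1+β} + (1+β) ∫₀^t e^{-(1+β)(2-εβ)(t-s)/2 + (1+β)(h(t)-h(s)) + √ε(1+β)(b(t)-b(s))} g(s) ds. Then ξ(t) ≥ e^{-(2-εβ)t/2 - N + √ε b(t)} ζ for all t ∈ [0,1]. -/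
open MeasureTheory Set Real

/-- Pathwise form of inequality (4.24): lower bound for the controlled
stochastic inhibitor. -/
theorem stmt_8 (β ζ N ε : ℝ) (hβ : 0 < β) (hζ : 0 < ζ) (hN : 0 < N)
    (hε : 0 < ε) (hεβ : ε * β < 2)
    (b : ℝ → ℝ) (hb : ContinuousOn b (Icc 0 1)) (hb0 : b 0 = 0)
    (f : ℝ → ℝ)
    (hf : IntervalIntegrable f volume 0 1)
    (hf2 : IntervalIntegrable (fun s => f s ^ 2) volume 0 1)
    (hfN : Real.sqrt (∫ s in (0:ℝ)..1, f s ^ 2) ≤ N)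
    (h : ℝ → ℝ) (hdef : ∀ t, h t = ∫ s in (0:ℝ)..t, f s)
    (g ξ : ℝ → ℝ)
    (hg : ContinuousOn g (Icc 0 1)) (hgpos : ∀ t ∈ Icc (0:ℝ) 1, 0 ≤ g t)
    (hξ : ContinuousOn ξ (Icc 0 1)) (hξpos : ∀ t ∈ Icc (0:ℝ) 1, 0 < ξ t)
    (heq : ∀ t ∈ Icc (0:ℝ) 1,
      ξ t ^ (1 + β) =
        Real.exp (-(1 + β) * (2 - ε * β) * t / 2 + (1 + β) * h t
            + Real.sqrt ε * (1 + β) * b t) * ζ ^ (1 + β)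
        + (1 + β) * ∫ s in (0:ℝ)..t,
            Real.exp (-(1 + β) * (2 - ε * β) * (t - s) / 2
              + (1 + β) * (h t - h s) + Real.sqrt ε * (1 + β) * (b t - b s)) * g s) :
    ∀ t ∈ Icc (0:ℝ) 1,
      Real.exp (-(2 - ε * β) * t / 2 - N + Real.sqrt ε * b t) * ζ ≤ ξ t := by
  intro t ht
  obtain ⟨ht0, ht1⟩ := ht
  have h1β : (0:ℝ) < 1 + β := by linarith
  -- Step 1: bound on h t : -N ≤ h t
  have hsub : Set.uIcc (0:ℝ) t ⊆ Set.uIcc (0:ℝ) 1 := by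
    rw [Set.uIcc_of_le ht0, Set.uIcc_of_le (by norm_num : (0:ℝ) ≤ 1)]
    exact Icc_subset_Icc le_rfl ht1
  have hft : IntervalIntegrable f volume 0 t := hf.mono_set hsub
  have hf2t : IntervalIntegrable (fun s => f s ^ 2) volume 0 t := hf2.mono_set hsub
  have hI2 : (∫ s in (0:ℝ)..1, f s ^ 2) ≤ N ^ 2 := by
    have h0 : (0:ℝ) ≤ ∫ s in (0:ℝ)..1, f s ^ 2 :=
      intervalIntegral.integral_nonneg (by norm_num) (fun s _ => sq_nonneg _)
    nlinarith [Real.sq_sqrt h0, Real.sqrt_nonneg (∫ s in (0:ℝ)..1, f s ^ 2)]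
  have hf2t1 : IntervalIntegrable (fun s => f s ^ 2) volume t 1 :=
    hf2.mono_set (by
      rw [Set.uIcc_of_le ht1, Set.uIcc_of_le (by norm_num : (0:ℝ) ≤ 1)]
      exact Icc_subset_Icc ht0 le_rfl)
  have hI2t : (∫ s in (0:ℝ)..t, f s ^ 2) ≤ N ^ 2 := by
    have hsplit := intervalIntegral.integral_add_adjacent_intervals hf2t hf2t1
    have hnn : (0:ℝ) ≤ ∫ s in t..1, f s ^ 2 :=
      intervalIntegral.integral_nonneg ht1 (fun s _ => sq_nonneg _)
    linarith
  have habsf : ∀ s, |f s| ≤ (N + f s ^ 2 / N) / 2 := by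
    intro s
    rw [le_div_iff₀ (by norm_num : (0:ℝ) < 2), ← sub_nonneg]
    have heq2 : N + f s ^ 2 / N - |f s| * 2 = (N ^ 2 + f s ^ 2 - 2 * N * |f s|) / N := by
      field_simp
    rw [heq2]
    apply div_nonneg _ hN.le
    nlinarith [sq_nonneg (|f s| - N), sq_abs (f s)]
  have hhN : -N ≤ h t := by
    have habs : |∫ s in (0:ℝ)..t, f s| ≤ ∫ s in (0:ℝ)..t, |f s| := by
      simpa using intervalIntegral.abs_integral_le_integral_abs ht0 (f := f)
    have hint : (∫ s in (0:ℝ)..t, |f s|) ≤ ∫ s in (0:ℝ)..t, (N + f s ^ 2 / N) / 2 := by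
      apply intervalIntegral.integral_mono_on ht0 hft.abs
      · exact (intervalIntegrable_const.add (hf2t.div_const N)).div_const 2
      · exact fun s _ => habsf s
    have hval : (∫ s in (0:ℝ)..t, (N + f s ^ 2 / N) / 2)
        = (N * t + (∫ s in (0:ℝ)..t, f s ^ 2) / N) / 2 := by
      rw [intervalIntegral.integral_div, intervalIntegral.integral_add
          (intervalIntegrable_const) (hf2t.div_const N),
        intervalIntegral.integral_div, intervalIntegral.integral_const]
      simp only [smul_eq_mul]
      ring
    have : |h t| ≤ N := by
      rw [hdef]
      refine habs.trans (hint.trans ?_)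
      rw [hval]
      have : (∫ s in (0:ℝ)..t, f s ^ 2) / N ≤ N := by
        rw [div_le_iff₀ hN]; nlinarith
      nlinarith
    exact neg_le_of_abs_le this
  -- Step 2: the integral term is nonneg
  have hintpos : (0:ℝ) ≤ ∫ s in (0:ℝ)..t,
      Real.exp (-(1 + β) * (2 - ε * β) * (t - s) / 2
        + (1 + β) * (h t - h s) + Real.sqrt ε * (1 + β) * (b t - b s)) * g s := by
    apply intervalIntegral.integral_nonneg ht0
    intro s hs
    exact mul_nonneg (Real.exp_pos _).le
      (hgpos s ⟨hs.1, hs.2.trans ht1⟩)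
  -- Step 3: ξ t ^ (1+β) ≥ (exp c * ζ) ^ (1+β)
  set c : ℝ := -(2 - ε * β) * t / 2 + h t + Real.sqrt ε * b t with hc
  have hkey : (Real.exp c * ζ) ^ (1 + β) ≤ ξ t ^ (1 + β) := by
    rw [Real.mul_rpow (Real.exp_pos _).le hζ.le, ← Real.exp_mul]
    rw [heq t ⟨ht0, ht1⟩]
    have : c * (1 + β) = -(1 + β) * (2 - ε * β) * t / 2 + (1 + β) * h t
        + Real.sqrt ε * (1 + β) * b t := by rw [hc]; ring
    rw [this]
    nlinarith [hintpos, Real.exp_pos (-(1 + β) * (2 - ε * β) * t / 2 + (1 + β) * h t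
        + Real.sqrt ε * (1 + β) * b t), Real.rpow_pos_of_pos hζ (1 + β)]
  have hroot : Real.exp c * ζ ≤ ξ t := by
    have := (Real.rpow_le_rpow_iff (mul_nonneg (Real.exp_pos _).le hζ.le)
      (hξpos t ⟨ht0, ht1⟩).le h1β).mp hkey
    exact this
  -- Step 4: conclude
  refine le_trans ?_ hroot
  apply mul_le_mul_of_nonneg_right _ hζ.le
  apply Real.exp_le_exp.mpr
  rw [hc]; linarith
end

section
/- Let β > 0, ζ > 0, N > 0 and 0 < ε with εβ < 2. Let b : [0,1] → ℝ be continuous with b(0) = 0 and write b*_1 = sup_{0≤s≤1} |b(s)|. Let f ∈ L²([0,1];ℝ) with ‖f‖_{L²([0,1])} ≤ N, set h(t) = ∫₀^t f(s) ds, let g : [0,1] → ℝ be continuous and nonnegative, and let ξ : [0,1] → ℝ be continuous and positive such that for every t ∈ [0,1], ξ(t)^{1+β} = e^{-(1+β)(2-εβ)t/2 + (1+β)h(t) + √ε(1+β)b(t)} ζ^{1+β} + (1+β) ∫₀^t e^{-(1+β)(2-εβ)(t-s)/2 + (1+β)(h(t)-h(s)) + √ε(1+β)(b(t)-b(s))}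 g(s) ds. Then inf_{0≤t≤1} ξ(t) ≥ e^{-1 - N - √ε b*_1} ζ. -/
open MeasureTheory Set Real

/-- Cauchy–Schwarz step: the integral of `|f|` on `[0,1]` is bounded by the `L²` norm. -/
lemma stmt_9_cs (f : ℝ → ℝ)
    (hf : IntervalIntegrable f volume 0 1)
    (hf2 : IntervalIntegrable (fun s => f s ^ 2) volume 0 1) :
    ∫ s in (0:ℝ)..1, |f s| ≤ Real.sqrt (∫ s in (0:ℝ)..1, f s ^ 2) := by
  set μ : Measure ℝ := volume.restrict (Ioc (0:ℝ) 1) with hμ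
  have hpq : Real.HolderConjugate 2 2 := Real.holderConjugate_iff.mpr ⟨by norm_num, by norm_num⟩
  have h2e : ENNReal.ofReal (2:ℝ) = 2 := by norm_num
  have hmemf : MemLp f (ENNReal.ofReal (2:ℝ)) μ := by
    rw [h2e]
    exact (memLp_two_iff_integrable_sq hf.1.aestronglyMeasurable).2 hf2.1
  have hmem1 : MemLp (fun _ : ℝ => (1:ℝ)) (ENNReal.ofReal (2:ℝ)) μ := by
    rw [h2e]; exact memLp_const 1
  have key := MeasureTheory.integral_mul_norm_le_Lp_mul_Lq hpq hmemf hmem1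
  have hμ1 : μ (univ) = 1 := by
    rw [hμ, Measure.restrict_apply_univ]
    simp
  have h1 : ∫ a, ‖f a‖ * ‖(1:ℝ)‖ ∂μ = ∫ s in (0:ℝ)..1, |f s| := by
    rw [intervalIntegral.integral_of_le zero_le_one]
    simp [Real.norm_eq_abs]; rfl
  have h2 : ∫ a, ‖f a‖ ^ (2:ℝ) ∂μ = ∫ s in (0:ℝ)..1, f s ^ 2 := by
    rw [intervalIntegral.integral_of_le zero_le_one]
    refine integral_congr_ae (ae_of_all _ fun a => ?_)
    show ‖f a‖ ^ (2:ℝ) = f a ^ 2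
    rw [show (2:ℝ) = ((2:ℕ):ℝ) by norm_num, Real.rpow_natCast, Real.norm_eq_abs, sq_abs]
  have h3 : ∫ _ : ℝ, ‖(1:ℝ)‖ ^ (2:ℝ) ∂μ = 1 := by
    simp [Measure.real, hμ1]
  rw [h1, h2, h3] at key
  calc ∫ s in (0:ℝ)..1, |f s| ≤ (∫ s in (0:ℝ)..1, f s ^ 2) ^ (1/2 : ℝ) * 1 ^ (1/2 : ℝ) := key
    _ = Real.sqrt (∫ s in (0:ℝ)..1, f s ^ 2) := by
        rw [Real.one_rpow, mul_one, Real.sqrt_eq_rpow]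

/-- Pathwise form of inequality (4.25): infimum lower bound for the controlled
stochastic inhibitor. -/
theorem stmt_9 (β ζ N ε : ℝ) (hβ : 0 < β) (hζ : 0 < ζ) (hN : 0 < N)
    (hε : 0 < ε) (hεβ : ε * β < 2)
    (b : ℝ → ℝ) (hb : ContinuousOn b (Icc 0 1)) (hb0 : b 0 = 0)
    (f : ℝ → ℝ)
    (hf : IntervalIntegrable f volume 0 1)
    (hf2 : IntervalIntegrable (fun s => f s ^ 2) volume 0 1)
    (hfN : Real.sqrt (∫ s in (0:ℝ)..1, f s ^ 2) ≤ N)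
    (h : ℝ → ℝ) (hdef : ∀ t, h t = ∫ s in (0:ℝ)..t, f s)
    (g ξ : ℝ → ℝ)
    (hg : ContinuousOn g (Icc 0 1)) (hgpos : ∀ t ∈ Icc (0:ℝ) 1, 0 ≤ g t)
    (hξ : ContinuousOn ξ (Icc 0 1)) (hξpos : ∀ t ∈ Icc (0:ℝ) 1, 0 < ξ t)
    (heq : ∀ t ∈ Icc (0:ℝ) 1,
      ξ t ^ (1 + β) =
        Real.exp (-(1 + β) * (2 - ε * β) * t / 2 + (1 + β) * h t
            + Real.sqrt ε * (1 + β) * b t) * ζ ^ (1 + β)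
        + (1 + β) * ∫ s in (0:ℝ)..t,
            Real.exp (-(1 + β) * (2 - ε * β) * (t - s) / 2
              + (1 + β) * (h t - h s) + Real.sqrt ε * (1 + β) * (b t - b s)) * g s) :
    Real.exp (-1 - N - Real.sqrt ε * sSup ((fun s => |b s|) '' Icc (0:ℝ) 1)) * ζ
      ≤ sInf (ξ '' Icc (0:ℝ) 1) := by
  set M := sSup ((fun s => |b s|) '' Icc (0:ℝ) 1) with hMdef
  have hbdd : BddAbove ((fun s => |b s|) '' Icc (0:ℝ) 1) :=
    (isCompact_Icc.image_of_continuousOn hb.abs).bddAbove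
  have hbM : ∀ t ∈ Icc (0:ℝ) 1, |b t| ≤ M := fun t ht => le_csSup hbdd ⟨t, ht, rfl⟩
  -- h t ≥ -N
  have hhN : ∀ t ∈ Icc (0:ℝ) 1, -N ≤ h t := by
    intro t ht
    have h1 : |h t| ≤ ∫ s in (0:ℝ)..1, |f s| := by
      rw [hdef]
      calc |∫ s in (0:ℝ)..t, f s| ≤ ∫ s in (0:ℝ)..t, |f s| :=
            intervalIntegral.abs_integral_le_integral_abs ht.1
        _ ≤ ∫ s in (0:ℝ)..1, |f s| :=
            intervalIntegral.integral_mono_interval le_rfl ht.1 ht.2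
              (ae_of_all _ fun s => abs_nonneg _) hf.abs
    have h2 : |h t| ≤ N := h1.trans ((stmt_9_cs f hf hf2).trans hfN)
    linarith [neg_abs_le (h t)]
  have h1β : (0:ℝ) < 1 + β := by linarith
  refine le_csInf ⟨ξ 0, ⟨0, by simp, rfl⟩⟩ ?_
  rintro y ⟨t, ht, rfl⟩
  set A := -(2 - ε * β) * t / 2 + h t + Real.sqrt ε * b t with hA
  -- lower bound ξ t ^ (1+β)
  have hint : 0 ≤ (1 + β) * ∫ s in (0:ℝ)..t,
      Real.exp (-(1 + β) * (2 - ε * β) * (t - s) / 2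
        + (1 + β) * (h t - h s) + Real.sqrt ε * (1 + β) * (b t - b s)) * g s := by
    refine mul_nonneg h1β.le (intervalIntegral.integral_nonneg ht.1 fun s hs => ?_)
    exact mul_nonneg (Real.exp_pos _).le
      (hgpos s ⟨hs.1, hs.2.trans ht.2⟩)
  have hstep : (Real.exp A * ζ) ^ (1 + β) ≤ ξ t ^ (1 + β) := by
    have hexp : -(1 + β) * (2 - ε * β) * t / 2 + (1 + β) * h t
        + Real.sqrt ε * (1 + β) * b t = A * (1 + β) := by
      rw [hA]; ring
    have hEq := heq t ht
    rw [hexp, Real.exp_mul] at hEq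
    rw [Real.mul_rpow (Real.exp_pos A).le hζ.le]
    linarith [hEq, hint]
  have hle : Real.exp A * ζ ≤ ξ t :=
    (Real.rpow_le_rpow_iff (mul_pos (Real.exp_pos A) hζ).le (hξpos t ht).le h1β).1 hstep
  -- bound A from below
  have hAlb : -1 - N - Real.sqrt ε * M ≤ A := by
    have h1 : -(2 - ε * β) * t / 2 ≥ -1 := by
      nlinarith [ht.1, ht.2, mul_pos hε hβ]
    have h2 : -N ≤ h t := hhN t ht
    have h3 : -(Real.sqrt ε * M) ≤ Real.sqrt ε * b t := by
      have hb1 : -M ≤ b t := by linarith [neg_abs_le (b t), hbM t ht]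
      have := mul_le_mul_of_nonneg_left hb1 (Real.sqrt_nonneg ε)
      linarith [this]
    rw [hA]; linarith
  calc Real.exp (-1 - N - Real.sqrt ε * M) * ζ
      ≤ Real.exp A * ζ := by
        exact mul_le_mul_of_nonneg_right (Real.exp_le_exp.2 hAlb) hζ.le
    _ ≤ ξ t := hle
end

section
/- Let β > 0, δ > 0, ζ > 0, N > 0 and 0 < ε with εβ < 2. Let b : [0,1] → ℝ be continuous with b(0) = 0 and write b*_1 = sup_{0≤s≤1} |b(s)|. Let f ∈ L²([0,1];ℝ) with ‖f‖_{L²([0,1])} ≤ N, let g : [0,1] → ℝ be continuous and nonnegative, let ξ : [0,1] → ℝ be continuous and positive with ξ(s) ≥ e^{-1 - N - √ε b*_1} ζ for all s ∈ [0,1], and let m : [0,1] → ℝ be continuous with m(0) = 0, such that for every t ∈ [0,1], ξ(t)^{-δ} - ζ^{-δ} = (δ(2+ε+δε)/2) ∫₀^t ξ(s)^{-δ} ds - δ ∫₀^t g(s)/ξ(s)^{1+δ+β} ds - δ ∫₀^t ξ(s)^{-δ} f(s) ds - δ √ε m(t). Then ∫₀^1 g(s)/ξ(s)^{1+β+δ}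 ds ≤ δ^{-1} ζ^{-δ} + ((2+ε+δε+2N)/2) e^{δ + δN + δ√ε b*_1} ζ^{-δ} + √ε sup_{0≤t≤1} |m(t)|. -/
open MeasureTheory Set Real

/-- Pathwise form of Lemma 4.6 for the controlled stochastic inhibitor. -/
theorem stmt_11 (β δ ζ N ε : ℝ) (hβ : 0 < β) (hδ : 0 < δ) (hζ : 0 < ζ)
    (hN : 0 < N) (hε : 0 < ε) (hεβ : ε * β < 2)
    (b : ℝ → ℝ) (hb : ContinuousOn b (Icc 0 1)) (hb0 : b 0 = 0)
    (f : ℝ → ℝ)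
    (hf : IntervalIntegrable f volume 0 1)
    (hf2 : IntervalIntegrable (fun s => f s ^ 2) volume 0 1)
    (hfN : Real.sqrt (∫ s in (0:ℝ)..1, f s ^ 2) ≤ N)
    (g ξ m : ℝ → ℝ)
    (hg : ContinuousOn g (Icc 0 1)) (hgpos : ∀ t ∈ Icc (0:ℝ) 1, 0 ≤ g t)
    (hξ : ContinuousOn ξ (Icc 0 1)) (hξpos : ∀ t ∈ Icc (0:ℝ) 1, 0 < ξ t)
    (hξlow : ∀ s ∈ Icc (0:ℝ) 1,
      Real.exp (-1 - N - Real.sqrt ε * sSup ((fun r => |b r|) '' Icc (0:ℝ) 1)) * ζ ≤ ξ s)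
    (hm : ContinuousOn m (Icc 0 1)) (hm0 : m 0 = 0)
    (heq : ∀ t ∈ Icc (0:ℝ) 1,
      ξ t ^ (-δ) - ζ ^ (-δ) =
        (δ * (2 + ε + δ * ε) / 2) * (∫ s in (0:ℝ)..t, ξ s ^ (-δ))
        - δ * (∫ s in (0:ℝ)..t, g s / ξ s ^ (1 + δ + β))
        - δ * (∫ s in (0:ℝ)..t, ξ s ^ (-δ) * f s)
        - δ * Real.sqrt ε * m t) :
    (∫ s in (0:ℝ)..1, g s / ξ s ^ (1 + β + δ)) ≤
      δ⁻¹ * ζ ^ (-δ)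
      + ((2 + ε + δ * ε + 2 * N) / 2)
          * Real.exp (δ + δ * N + δ * Real.sqrt ε * sSup ((fun s => |b s|) '' Icc (0:ℝ) 1))
          * ζ ^ (-δ)
      + Real.sqrt ε * sSup ((fun t => |m t|) '' Icc (0:ℝ) 1) := by
  have huIcc : Set.uIcc (0:ℝ) 1 = Icc (0:ℝ) 1 := uIcc_of_le zero_le_one
  set A := sSup ((fun r => |b r|) '' Icc (0:ℝ) 1) with hA
  set M := sSup ((fun t => |m t|) '' Icc (0:ℝ) 1) with hM
  set K := Real.exp (δ + δ * N + δ * Real.sqrt ε * A) * ζ ^ (-δ) with hK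
  have hζd : (0:ℝ) < ζ ^ (-δ) := Real.rpow_pos_of_pos hζ _
  have hKpos : 0 < K := mul_pos (Real.exp_pos _) hζd
  have hsε : 0 ≤ Real.sqrt ε := Real.sqrt_nonneg ε
  -- pointwise bound ξ s ^ (-δ) ≤ K
  have hcpos : 0 < Real.exp (-1 - N - Real.sqrt ε * A) * ζ := mul_pos (Real.exp_pos _) hζ
  have hKb : ∀ s ∈ Icc (0:ℝ) 1, ξ s ^ (-δ) ≤ K := by
    intro s hs
    have h1 : ξ s ^ (-δ) ≤ (Real.exp (-1 - N - Real.sqrt ε * A) * ζ) ^ (-δ) :=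
      Real.rpow_le_rpow_of_nonpos hcpos (hξlow s hs) (neg_nonpos.mpr hδ.le)
    refine h1.trans_eq ?_
    rw [Real.mul_rpow (Real.exp_pos _).le hζ.le, hK,
      Real.rpow_def_of_pos (Real.exp_pos _), Real.log_exp]
    ring_nf
  -- continuity / integrability
  have hcont : ContinuousOn (fun s => ξ s ^ (-δ)) (Icc (0:ℝ) 1) :=
    hξ.rpow_const (fun x hx => Or.inl (hξpos x hx).ne')
  have hint1 : IntervalIntegrable (fun s => ξ s ^ (-δ)) volume 0 1 :=
    ContinuousOn.intervalIntegrable (by rw [huIcc]; exact hcont)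
  have hint2 : IntervalIntegrable (fun s => ξ s ^ (-δ) * f s) volume 0 1 :=
    hf.continuousOn_mul (g := fun s => ξ s ^ (-δ)) (by rw [huIcc]; exact hcont)
  -- Iξ ≤ K
  have hIξ : (∫ s in (0:ℝ)..1, ξ s ^ (-δ)) ≤ K := by
    calc (∫ s in (0:ℝ)..1, ξ s ^ (-δ)) ≤ ∫ _ in (0:ℝ)..1, K :=
          intervalIntegral.integral_mono_on zero_le_one hint1 intervalIntegrable_const hKb
      _ = K := by simp
  -- ∫|f| ≤ N
  have hS0 : 0 ≤ ∫ s in (0:ℝ)..1, f s ^ 2 :=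
    intervalIntegral.integral_nonneg zero_le_one (fun s _ => sq_nonneg _)
  have hSN : (∫ s in (0:ℝ)..1, f s ^ 2) ≤ N ^ 2 := by
    have := Real.sq_sqrt hS0
    nlinarith [Real.sqrt_nonneg (∫ s in (0:ℝ)..1, f s ^ 2)]
  have hintabs : IntervalIntegrable (fun s => |f s|) volume 0 1 := hf.abs
  have hintq : IntervalIntegrable (fun s => (N + f s ^ 2 * N⁻¹) * 2⁻¹) volume 0 1 :=
    ((intervalIntegrable_const.add (hf2.mul_const N⁻¹)).mul_const 2⁻¹)
  have hf1 : (∫ s in (0:ℝ)..1, |f s|) ≤ N := by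
    have h1 : (∫ s in (0:ℝ)..1, |f s|) ≤ ∫ s in (0:ℝ)..1, (N + f s ^ 2 * N⁻¹) * 2⁻¹ := by
      refine intervalIntegral.integral_mono_on zero_le_one hintabs hintq (fun s _ => ?_)
      rw [← sub_nonneg, show (N + f s ^ 2 * N⁻¹) * 2⁻¹ - |f s|
          = ((|f s| - N) ^ 2) * N⁻¹ * 2⁻¹ from by
        field_simp; rw [sub_sq, sq_abs]; ring]
      positivity
    have h5 : (∫ s in (0:ℝ)..1, (N + f s ^ 2 * N⁻¹) * 2⁻¹)
        = (N + (∫ s in (0:ℝ)..1, f s ^ 2) * N⁻¹) * 2⁻¹ := by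
      rw [intervalIntegral.integral_mul_const, intervalIntegral.integral_add
        intervalIntegrable_const (hf2.mul_const N⁻¹), intervalIntegral.integral_mul_const]
      simp
    rw [h5] at h1
    have : (N + (∫ s in (0:ℝ)..1, f s ^ 2) * N⁻¹) * 2⁻¹ ≤ N := by
      rw [← sub_nonneg]
      have : N - (N + (∫ s in (0:ℝ)..1, f s ^ 2) * N⁻¹) * 2⁻¹
          = (N ^ 2 - (∫ s in (0:ℝ)..1, f s ^ 2)) * N⁻¹ * 2⁻¹ := by field_simp; ring
      rw [this]
      have := sub_nonneg.mpr hSN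
      positivity
    linarith
  -- |∫ ξ^{-δ} f| ≤ K * N
  have hIf : |∫ s in (0:ℝ)..1, ξ s ^ (-δ) * f s| ≤ K * N := by
    calc |∫ s in (0:ℝ)..1, ξ s ^ (-δ) * f s|
        ≤ ∫ s in (0:ℝ)..1, |ξ s ^ (-δ) * f s| :=
          intervalIntegral.abs_integral_le_integral_abs zero_le_one
      _ ≤ ∫ s in (0:ℝ)..1, K * |f s| := by
          refine intervalIntegral.integral_mono_on zero_le_one hint2.abs
            (hintabs.const_mul K) (fun s hs => ?_)
          rw [abs_mul, abs_of_nonneg (Real.rpow_nonneg (hξpos s hs).le _)]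
          exact mul_le_mul_of_nonneg_right (hKb s hs) (abs_nonneg _)
      _ = K * ∫ s in (0:ℝ)..1, |f s| := intervalIntegral.integral_const_mul _ _
      _ ≤ K * N := mul_le_mul_of_nonneg_left hf1 hKpos.le
  -- |m 1| ≤ M
  have hm1 : |m 1| ≤ M := by
    refine le_csSup ((isCompact_Icc.image_of_continuousOn hm.abs).bddAbove) ?_
    exact mem_image_of_mem _ (by norm_num : (1:ℝ) ∈ Icc (0:ℝ) 1)
  have hξ1 : 0 ≤ ξ 1 ^ (-δ) := Real.rpow_nonneg (hξpos 1 (by norm_num)).le _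
  have E := heq 1 (by norm_num)
  rw [show (1 + β + δ : ℝ) = 1 + δ + β by ring]
  rw [show ((2 + ε + δ * ε + 2 * N) / 2)
      * Real.exp (δ + δ * N + δ * Real.sqrt ε * A) * ζ ^ (-δ)
      = ((2 + ε + δ * ε + 2 * N) / 2) * K by rw [hK]; ring]
  rw [← mul_le_mul_iff_right₀ hδ]
  have hδinv : δ * δ⁻¹ = 1 := mul_inv_cancel₀ hδ.ne'
  have h6 : -(K * N) ≤ ∫ s in (0:ℝ)..1, ξ s ^ (-δ) * f s := (abs_le.mp hIf).1
  have h7 : -M ≤ m 1 := (abs_le.mp hm1).1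
  have h8 : δ * (2 + ε + δ * ε) / 2 * (∫ s in (0:ℝ)..1, ξ s ^ (-δ))
      ≤ δ * (2 + ε + δ * ε) / 2 * K := by
    apply mul_le_mul_of_nonneg_left hIξ
    positivity
  nlinarith [mul_le_mul_of_nonneg_left h6 hδ.le,
    mul_le_mul_of_nonneg_left h7 (mul_nonneg hδ.le hsε)]
end

section
/- Let η : [0,1] → ℝ be a nonnegative continuously differentiable function, let ψ : [0,1] → ℝ be nonnegative and integrable, let K ≥ 0 and σ ∈ (0,1), and write S = sup_{0≤t≤1} η(t). If η'(t) ≤ K ψ(t) S^σ for all t ∈ [0,1], then S ≤ max{ 1, ( η(0) + K ∫₀^1 ψ(s) ds )^{1/(1-σ)} }. -/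
open MeasureTheory Set Real

/-- Analytic core of the a priori energy estimates in Lemmas 3.4 and 4.12. -/
theorem stmt_17 (η η' ψ : ℝ → ℝ) (K σ : ℝ) (hK : 0 ≤ K) (hσ : σ ∈ Ioo (0:ℝ) 1)
    (hηnn : ∀ t ∈ Icc (0:ℝ) 1, 0 ≤ η t)
    (hηd : ∀ t ∈ Icc (0:ℝ) 1, HasDerivWithinAt η (η' t) (Icc 0 1) t)
    (hη'c : ContinuousOn η' (Icc 0 1))
    (hψnn : ∀ t ∈ Icc (0:ℝ) 1, 0 ≤ ψ t)
    (hψint : IntervalIntegrable ψ volume 0 1)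
    (hineq : ∀ t ∈ Icc (0:ℝ) 1,
      η' t ≤ K * ψ t * (sSup (η '' Icc (0:ℝ) 1)) ^ σ) :
    sSup (η '' Icc (0:ℝ) 1) ≤
      max 1 ((η 0 + K * ∫ s in (0:ℝ)..1, ψ s) ^ (1 / (1 - σ))) := by
  set S := sSup (η '' Icc (0:ℝ) 1) with hS
  have hcont : ContinuousOn η (Icc 0 1) := fun t ht => (hηd t ht).continuousWithinAt
  have hne : (η '' Icc (0:ℝ) 1).Nonempty := ⟨η 0, mem_image_of_mem _ (by norm_num)⟩
  have hbdd : BddAbove (η '' Icc (0:ℝ) 1) :=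
    (isCompact_Icc.image_of_continuousOn hcont).bddAbove
  have hS0 : 0 ≤ S := le_csSup hbdd (mem_image_of_mem _ (by norm_num : (0:ℝ) ∈ Icc (0:ℝ) 1))
    |>.trans' (hηnn 0 (by norm_num))
  have hSσ0 : 0 ≤ S ^ σ := Real.rpow_nonneg hS0 σ
  have hψI0 : 0 ≤ ∫ s in (0:ℝ)..1, ψ s :=
    intervalIntegral.integral_nonneg (by norm_num) (fun s hs => hψnn s hs)
  have hA0 : 0 ≤ η 0 + K * ∫ s in (0:ℝ)..1, ψ s := by
    have := hηnn 0 (by norm_num); positivity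
  -- key: every value of η is ≤ η 0 + K * ∫ψ * S^σ
  have key : ∀ t ∈ Icc (0:ℝ) 1, η t ≤ η 0 + K * (∫ s in (0:ℝ)..1, ψ s) * S ^ σ := by
    intro t ht
    have hint1 : IntervalIntegrable η' volume 0 t :=
      (hη'c.mono (Icc_subset_Icc le_rfl ht.2)).intervalIntegrable_of_Icc ht.1
    have hint2 : IntervalIntegrable (fun s => K * ψ s * S ^ σ) volume 0 1 :=
      (hψint.const_mul K).mul_const _
    have hsub : uIcc (0:ℝ) t ⊆ uIcc (0:ℝ) 1 := by
      rw [uIcc_of_le ht.1, uIcc_of_le (by norm_num : (0:ℝ) ≤ 1)]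
      exact Icc_subset_Icc le_rfl ht.2
    have hint2t : IntervalIntegrable (fun s => K * ψ s * S ^ σ) volume 0 t :=
      hint2.mono_set hsub
    have ftc : ∫ x in (0:ℝ)..t, η' x = η t - η 0 := by
      apply intervalIntegral.integral_eq_sub_of_hasDeriv_right_of_le ht.1
        (hcont.mono (Icc_subset_Icc le_rfl ht.2)) _ hint1
      intro x hx
      exact (hηd x ⟨hx.1.le, hx.2.le.trans ht.2⟩).mono_of_mem_nhdsWithin
        (Icc_mem_nhdsGT_of_mem ⟨hx.1.le, hx.2.trans_le ht.2⟩)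
    have h1 : ∫ x in (0:ℝ)..t, η' x ≤ ∫ x in (0:ℝ)..t, K * ψ x * S ^ σ := by
      apply intervalIntegral.integral_mono_on ht.1 hint1 hint2t
      intro x hx
      exact hineq x ⟨hx.1, hx.2.trans ht.2⟩
    have h2 : ∫ x in (0:ℝ)..t, K * ψ x * S ^ σ ≤ ∫ x in (0:ℝ)..1, K * ψ x * S ^ σ := by
      apply intervalIntegral.integral_mono_interval le_rfl ht.1 ht.2 _ hint2
      filter_upwards [ae_restrict_mem measurableSet_Ioc] with x hx
      have := hψnn x ⟨hx.1.le, hx.2⟩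
      positivity
    have h3 : ∫ x in (0:ℝ)..1, K * ψ x * S ^ σ = K * (∫ s in (0:ℝ)..1, ψ s) * S ^ σ := by
      rw [intervalIntegral.integral_mul_const, intervalIntegral.integral_const_mul]
    nlinarith [ftc ▸ (h1.trans (h2.trans_eq h3))]
  have hSle : S ≤ η 0 + K * (∫ s in (0:ℝ)..1, ψ s) * S ^ σ := by
    apply csSup_le hne
    rintro y ⟨t, ht, rfl⟩
    exact key t ht
  rcases le_or_gt S 1 with h | h
  · exact h.trans (le_max_left _ _)
  · apply le_max_of_le_right
    set A := η 0 + K * ∫ s in (0:ℝ)..1, ψ s with hA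
    have hSσ1 : (1:ℝ) ≤ S ^ σ := Real.one_le_rpow h.le hσ.1.le
    have hSA : S ≤ A * S ^ σ := by
      have h0 : 0 ≤ η 0 := hηnn 0 (by norm_num)
      nlinarith [hSle, mul_nonneg (mul_nonneg hK hψI0) (sub_nonneg.mpr hSσ1)]
    have hS1σ : S ^ (1 - σ) ≤ A := by
      have hSpos : (0:ℝ) < S := lt_trans one_pos h
      have : S ^ (1 - σ) * S ^ σ ≤ A * S ^ σ := by
        rw [← Real.rpow_add hSpos, sub_add_cancel, Real.rpow_one]; exact hSA
      exact le_of_mul_le_mul_right this (lt_of_lt_of_le one_pos hSσ1)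
    have hσne : (1:ℝ) - σ ≠ 0 := by
      have := hσ.2; intro hc; linarith [sub_eq_zero.mp hc]
    calc S = (S ^ (1 - σ)) ^ (1 / (1 - σ)) := by
            rw [← Real.rpow_mul hS0, mul_one_div, div_self hσne, Real.rpow_one]
      _ ≤ A ^ (1 / (1 - σ)) :=
          Real.rpow_le_rpow (Real.rpow_nonneg hS0 _) hS1σ
            (by have := hσ.2; apply div_nonneg <;> linarith)
end
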